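/- arXiv:1401.3675 — 12 statements merged into one kernel-verified Lean document; each statement's English description precedes it below -/
import Mathlib

section
/- If an ordinal one-sided matching mechanism is strategyproof, then it is upper invariant: for any agent i, any type profile, and any misreport obtained from the true type by swapping two adjacent objects a_k and a_{k+1} in the preference order, agent i's allocation probability is unchanged for every object strictly preferred to a_k under the true type. -/
open Finset

/-- A (strict) preference type over `m` objects: rank `k` maps to the `k`-th choice. -/
abbrev Pref (m : ℕ) := Fin m ≃ Fin m

/-- `a` is strictly preferred to `b` under type `t` (smaller rank). -/
def Prefers {m : ℕ} (t : Pref m) (a b : Fin m) : Prop := t.symm a < t.symm b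

/-- A vNM utility `u` is consistent with type `t`. -/
def Consistent {m : ℕ} (t : Pref m) (u : Fin m → ℝ) : Prop :=
  ∀ a b : Fin m, Prefers t a b ↔ u b < u a

/-- Swap the objects at ranks `k` and `k'` in the preference order. -/
def swapRanks {m : ℕ} (t : Pref m) (k k' : Fin m) : Pref m := (Equiv.swap k k').trans t

/-- Expected utility of allocation (probability vector) `p` under utility `u`. -/
def EU {m : ℕ} (u p : Fin m → ℝ) : ℝ := ∑ j, u j * p j

/-- The mechanism outputs valid allocation matrices: entries nonnegative, rows sum to one,
column sums respect capacities `q`. -/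
def ValidAlloc {n m : ℕ} (q : Fin m → ℕ) (f : (Fin n → Pref m) → Fin n → Fin m → ℝ) : Prop :=
  ∀ t : Fin n → Pref m,
    (∀ i j, 0 ≤ f t i j) ∧ (∀ i, ∑ j, f t i j = 1) ∧ (∀ j, ∑ i, f t i j ≤ (q j : ℝ))

/-- Strategyproofness: truth-telling maximizes expected utility for every consistent utility. -/
def Strategyproof {n m : ℕ} (f : (Fin n → Pref m) → Fin n → Fin m → ℝ) : Prop :=
  ∀ (i : Fin n) (t : Fin n → Pref m) (t' : Pref m) (u : Fin m → ℝ),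
    Consistent (t i) u → EU u (f (Function.update t i t') i) ≤ EU u (f t i)

/-- Upper invariance: an adjacent swap at ranks `k, k+1` leaves the allocation of every object
strictly preferred to the `k`-th choice unchanged. -/
def UpperInvariant {n m : ℕ} (f : (Fin n → Pref m) → Fin n → Fin m → ℝ) : Prop :=
  ∀ (i : Fin n) (t : Fin n → Pref m) (k : Fin m) (h : k.val + 1 < m) (j : Fin m),
    Prefers (t i) j ((t i) k) →
    f (Function.update t i (swapRanks (t i) k ⟨k.val + 1, h⟩)) i j = f t i j

/-- Lower invariance: an adjacent swap at ranks `k, k+1` leaves the allocation of every object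
ranked strictly below the `(k+1)`-st choice unchanged. -/
def LowerInvariant {n m : ℕ} (f : (Fin n → Pref m) → Fin n → Fin m → ℝ) : Prop :=
  ∀ (i : Fin n) (t : Fin n → Pref m) (k : Fin m) (h : k.val + 1 < m) (j : Fin m),
    Prefers (t i) ((t i) ⟨k.val + 1, h⟩) j →
    f (Function.update t i (swapRanks (t i) k ⟨k.val + 1, h⟩)) i j = f t i j

/-- Swap monotonicity: upon an adjacent swap `a_k ≻ a_{k+1}` to `a_{k+1} ≻ a_k`, either the
agent's allocation is unchanged, or its probability for `a_k` strictly decreases and its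
probability for `a_{k+1}` strictly increases. -/
def SwapMonotonic {n m : ℕ} (f : (Fin n → Pref m) → Fin n → Fin m → ℝ) : Prop :=
  ∀ (i : Fin n) (t : Fin n → Pref m) (k : Fin m) (h : k.val + 1 < m),
    (∀ j, f (Function.update t i (swapRanks (t i) k ⟨k.val + 1, h⟩)) i j = f t i j) ∨
    (f (Function.update t i (swapRanks (t i) k ⟨k.val + 1, h⟩)) i ((t i) k) < f t i ((t i) k) ∧
     f t i ((t i) ⟨k.val + 1, h⟩) <
       f (Function.update t i (swapRanks (t i) k ⟨k.val + 1, h⟩)) i ((t i) ⟨k.val + 1, h⟩))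

/-- Minimum value of a utility function. -/
noncomputable def umin {m : ℕ} (u : Fin m → ℝ) : ℝ := sInf (Set.range u)

/-- Uniformly relatively bounded indifference with bound `r`. -/
def URBI {m : ℕ} (r : ℝ) (u : Fin m → ℝ) : Prop :=
  ∀ a b : Fin m, u b < u a → u b - umin u ≤ r * (u a - umin u)

/-- `r`-partial strategyproofness: truth-telling is optimal for every consistent utility
satisfying `URBI r`. -/
def PartialSP {n m : ℕ} (r : ℝ) (f : (Fin n → Pref m) → Fin n → Fin m → ℝ) : Prop :=
  ∀ (i : Fin n) (t : Fin n → Pref m) (t' : Pref m) (u : Fin m → ℝ),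
    Consistent (t i) u → URBI r u →
    EU u (f (Function.update t i t') i) ≤ EU u (f t i)

/-- Cumulative probability of the weak upper contour set of `a` under type `t`. -/
def cumul {m : ℕ} (t : Pref m) (p : Fin m → ℝ) (a : Fin m) : ℝ :=
  ∑ b ∈ Finset.univ.filter (fun b => t.symm b ≤ t.symm a), p b

/-- `p` strictly first order-stochastically dominates `q` with respect to type `t`. -/
def StochDom {m : ℕ} (t : Pref m) (p q : Fin m → ℝ) : Prop :=
  (∀ a, cumul t q a ≤ cumul t p a) ∧ (∃ a, cumul t q a < cumul t p a)

lemma nonpos_of_le_eps (A B : ℝ) (h : ∀ ε : ℝ, 0 < ε → A ≤ ε * B) : A ≤ 0 := by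
  by_contra hA
  push_neg at hA
  rcases le_or_gt B 0 with hB | hB
  · have := h 1 one_pos; nlinarith
  · have h2 := h (A / (2 * B)) (by positivity)
    have h3 : A / (2 * B) * B = A / 2 := by field_simp
    rw [h3] at h2; linarith

lemma consistent_linear {m : ℕ} (t : Pref m) (ℓ : ℕ) {ε : ℝ} (hε : 0 < ε) :
    Consistent t (fun a => (if (t.symm a).val ≤ ℓ then (1:ℝ) else 0)
      + ε * ((m:ℝ) - (t.symm a).val)) := by
  have mono : ∀ a b : Fin m, t.symm a < t.symm b →
      (if (t.symm b).val ≤ ℓ then (1:ℝ) else 0) + ε * ((m:ℝ) - (t.symm b).val)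
      < (if (t.symm a).val ≤ ℓ then (1:ℝ) else 0) + ε * ((m:ℝ) - (t.symm a).val) := by
    intro a b hab
    have hv : (t.symm a).val < (t.symm b).val := hab
    have hlt : ε * ((m:ℝ) - (t.symm b).val) < ε * ((m:ℝ) - (t.symm a).val) := by
      have : ((t.symm a).val : ℝ) < (t.symm b).val := by exact_mod_cast hv
      nlinarith
    by_cases hb : (t.symm b).val ≤ ℓ
    · have ha : (t.symm a).val ≤ ℓ := le_of_lt (lt_of_lt_of_le hv hb)
      simp only [ha, hb, if_pos]; linarith
    · have h0 : (0:ℝ) ≤ (if (t.symm a).val ≤ ℓ then (1:ℝ) else 0) := by positivity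
      simp only [hb, if_neg, not_false_iff]; linarith
  intro a b
  constructor
  · exact mono a b
  · intro hu
    dsimp only at hu
    by_contra hnot
    unfold Prefers at hnot
    push_neg at hnot
    rcases eq_or_lt_of_le hnot with heq | hlt
    · have hba : b = a := t.symm.injective heq
      rw [hba] at hu; exact absurd hu (lt_irrefl _)
    · have := mono b a hlt; linarith

/-- strategyproofness implies upper invariance. -/
theorem sp_implies_upperInvariant {n m : ℕ} (q : Fin m → ℕ) (hq : n ≤ ∑ j, q j)
    (f : (Fin n → Pref m) → Fin n → Fin m → ℝ) (hf : ValidAlloc q f)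
    (hsp : Strategyproof f) : UpperInvariant f := by
  intro i t k h j hj
  set k' : Fin m := ⟨k.val + 1, h⟩ with hk'
  set tI : Pref m := t i with htI
  set t' : Pref m := swapRanks tI k k' with ht'
  set p : Fin m → ℝ := f t i with hp
  set p' : Fin m → ℝ := f (Function.update t i t') i with hp'
  have hk'val : k'.val = k.val + 1 := rfl
  have hr' : ∀ a, t'.symm a = Equiv.swap k k' (tI.symm a) := by
    intro a
    rw [ht', swapRanks]
    simp [Equiv.symm_trans_apply]
  have hrj : (tI.symm j).val < k.val := by
    unfold Prefers at hj
    rw [Equiv.symm_apply_apply] at hj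
    exact hj
  have hχ : ∀ ℓ : ℕ, ℓ < k.val → ∀ a,
      (if (t'.symm a).val ≤ ℓ then (1:ℝ) else 0)
        = (if (tI.symm a).val ≤ ℓ then (1:ℝ) else 0) := by
    intro ℓ hℓ a
    rw [hr']
    rcases eq_or_ne (tI.symm a) k with hk1 | hk1
    · rw [hk1, Equiv.swap_apply_left]
      have h1 : ¬ k'.val ≤ ℓ := by omega
      have h2 : ¬ k.val ≤ ℓ := by omega
      simp [h1, h2]
    · rcases eq_or_ne (tI.symm a) k' with hk2 | hk2
      · rw [hk2, Equiv.swap_apply_right]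
        have h1 : ¬ k'.val ≤ ℓ := by omega
        have h2 : ¬ k.val ≤ ℓ := by omega
        simp [h1, h2]
      · rw [Equiv.swap_apply_of_ne_of_ne hk1 hk2]
  have key : ∀ ℓ : ℕ, ℓ < k.val →
      ∑ a, (if (tI.symm a).val ≤ ℓ then (1:ℝ) else 0) * (p' a - p a) = 0 := by
    intro ℓ hℓ
    have d1 : ∀ ε : ℝ, 0 < ε →
        ((∑ a, (if (tI.symm a).val ≤ ℓ then (1:ℝ) else 0) * p' a)
          - ∑ a, (if (tI.symm a).val ≤ ℓ then (1:ℝ) else 0) * p a)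
        ≤ ε * ((∑ a, ((m:ℝ) - (tI.symm a).val) * p a)
          - ∑ a, ((m:ℝ) - (tI.symm a).val) * p' a) := by
      intro ε hε
      have expand : ∀ g : Fin m → ℝ,
          EU (fun a => (if (tI.symm a).val ≤ ℓ then (1:ℝ) else 0)
            + ε * ((m:ℝ) - (tI.symm a).val)) g
          = (∑ a, (if (tI.symm a).val ≤ ℓ then (1:ℝ) else 0) * g a)
            + ε * ∑ a, ((m:ℝ) - (tI.symm a).val) * g a := by
        intro g
        unfold EU
        rw [Finset.mul_sum, ← Finset.sum_add_distrib]
        exact Finset.sum_congr rfl fun a _ => by ring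
      have hc : Consistent (t i) (fun a => (if (tI.symm a).val ≤ ℓ then (1:ℝ) else 0)
          + ε * ((m:ℝ) - (tI.symm a).val)) := by
        rw [← htI]; exact consistent_linear tI ℓ hε
      have hs := hsp i t t' _ hc
      rw [← hp, ← hp'] at hs
      rw [expand, expand] at hs
      linarith
    have d2 : ∀ ε : ℝ, 0 < ε →
        ((∑ a, (if (tI.symm a).val ≤ ℓ then (1:ℝ) else 0) * p a)
          - ∑ a, (if (tI.symm a).val ≤ ℓ then (1:ℝ) else 0) * p' a)
        ≤ ε * ((∑ a, ((m:ℝ) - (t'.symm a).val) * p' a)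
          - ∑ a, ((m:ℝ) - (t'.symm a).val) * p a) := by
      intro ε hε
      have expand : ∀ g : Fin m → ℝ,
          EU (fun a => (if (t'.symm a).val ≤ ℓ then (1:ℝ) else 0)
            + ε * ((m:ℝ) - (t'.symm a).val)) g
          = (∑ a, (if (tI.symm a).val ≤ ℓ then (1:ℝ) else 0) * g a)
            + ε * ∑ a, ((m:ℝ) - (t'.symm a).val) * g a := by
        intro g
        unfold EU
        rw [Finset.mul_sum, ← Finset.sum_add_distrib]
        refine Finset.sum_congr rfl fun a _ => ?_
        rw [← hχ ℓ hℓ a]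
        ring
      have hc : Consistent ((Function.update t i t') i)
          (fun a => (if (t'.symm a).val ≤ ℓ then (1:ℝ) else 0)
            + ε * ((m:ℝ) - (t'.symm a).val)) := by
        rw [Function.update_self]
        exact consistent_linear t' ℓ hε
      have hs := hsp i (Function.update t i t') tI _ hc
      have e2 : Function.update (Function.update t i t') i tI = t := by
        rw [Function.update_idem, htI, Function.update_eq_self]
      rw [e2, ← hp, ← hp'] at hs
      rw [expand, expand] at hs
      linarith
    have hA1 := nonpos_of_le_eps _ _ d1
    have hA2 := nonpos_of_le_eps _ _ d2
    have hsplit : ∑ a, (if (tI.symm a).val ≤ ℓ then (1:ℝ) else 0) * (p' a - p a)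
        = (∑ a, (if (tI.symm a).val ≤ ℓ then (1:ℝ) else 0) * p' a)
          - ∑ a, (if (tI.symm a).val ≤ ℓ then (1:ℝ) else 0) * p a := by
      rw [← Finset.sum_sub_distrib]
      exact Finset.sum_congr rfl fun a _ => by ring
    rw [hsplit]
    linarith
  have keyF : ∀ ℓ : ℕ, ℓ < k.val →
      ∑ a ∈ univ.filter (fun a => (tI.symm a).val ≤ ℓ), (p' a - p a) = 0 := by
    intro ℓ hℓ
    rw [Finset.sum_filter]
    rw [show (∑ a, if (tI.symm a).val ≤ ℓ then p' a - p a else 0)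
        = ∑ a, (if (tI.symm a).val ≤ ℓ then (1:ℝ) else 0) * (p' a - p a) from
      Finset.sum_congr rfl fun a _ => by split <;> simp]
    exact key ℓ hℓ
  rcases Nat.eq_zero_or_pos (tI.symm j).val with h0 | hpos
  · have hset : univ.filter (fun a => (tI.symm a).val ≤ 0) = {j} := by
      ext a
      simp only [mem_filter, mem_univ, true_and, mem_singleton, Nat.le_zero]
      constructor
      · intro ha
        exact tI.symm.injective (Fin.ext (by rw [ha, h0]))
      · intro ha
        rw [ha, h0]
    have hz := keyF 0 (by omega)
    rw [hset, Finset.sum_singleton] at hz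
    linarith
  · obtain ⟨r₀, hr0⟩ : ∃ r₀, (tI.symm j).val = r₀ + 1 :=
      ⟨_, (Nat.succ_pred_eq_of_pos hpos).symm⟩
    have hnotmem : j ∉ univ.filter (fun a => (tI.symm a).val ≤ r₀) := by
      simp only [mem_filter, mem_univ, true_and]
      omega
    have hset : univ.filter (fun a => (tI.symm a).val ≤ r₀ + 1)
        = insert j (univ.filter (fun a => (tI.symm a).val ≤ r₀)) := by
      ext a
      simp only [mem_filter, mem_univ, true_and, mem_insert]
      constructor
      · intro ha
        rcases Nat.lt_or_ge (tI.symm a).val (r₀ + 1) with hlt | hge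
        · right; omega
        · left
          exact tI.symm.injective (Fin.ext (by omega))
      · rintro (rfl | ha)
        · omega
        · omega
    have h1 := keyF (r₀ + 1) (by omega)
    have h2 := keyF r₀ (by omega)
    rw [hset, Finset.sum_insert hnotmem, h2] at h1
    linarith
end

section
/- If an ordinal one-sided matching mechanism is strategyproof, then it is lower invariant: for any agent i, any type profile, and any misreport obtained from the true type by swapping two adjacent objects a_k and a_{k+1}, agent i's allocation probability is unchanged for every object ranked strictly below a_{k+1} under the true type. -/
open Finset

private lemma eps_lemma (C X : ℝ) (h : ∀ ε : ℝ, 0 < ε → ε < 1 → C + ε * X ≤ 0) : C ≤ 0 := by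
  by_contra hC
  push_neg at hC
  rcases le_or_gt 0 X with hX | hX
  · have := h (1/2) (by norm_num) (by norm_num)
    nlinarith
  · have hXne : X ≠ 0 := ne_of_lt hX
    have hd : 0 < C / (-2 * X) := div_pos hC (by linarith)
    set ε := min (1/2) (C / (-2 * X)) with hε
    have hε0 : 0 < ε := lt_min (by norm_num) hd
    have hε1 : ε < 1 := lt_of_le_of_lt (min_le_left _ _) (by norm_num)
    have h1 := h ε hε0 hε1
    have h2 : ε ≤ C / (-2 * X) := min_le_right _ _
    have h3 : ε * X ≥ (C / (-2 * X)) * X := mul_le_mul_of_nonpos_right h2 (le_of_lt hX)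
    have h4 : (C / (-2 * X)) * X = -C / 2 := by field_simp
    linarith

private def gfun (m k r0 : ℕ) (ε δ : ℝ) : ℕ → ℝ := fun x =>
  (if x ≤ k then (m:ℝ) - x - 1 else (m:ℝ) - x) + (if x = k then ε else 0)
    + (if x = r0 then δ else 0)

private lemma gfun_strictAnti (m k r0 : ℕ) (ε δ : ℝ) (hε0 : 0 < ε) (hε1 : ε < 1)
    (hδ1 : -(1/2) < δ) (hδ2 : δ < 1/2) (hkr : k + 1 < r0) :
    StrictAnti (gfun m k r0 ε δ) := by
  apply strictAnti_nat_of_succ_lt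
  intro x
  unfold gfun
  split_ifs <;> push_cast <;> first
    | linarith
    | (exfalso; omega)

private lemma consistent_comp {m : ℕ} (t : Pref m) (g : ℕ → ℝ) (hg : StrictAnti g) :
    Consistent t (fun a => g ((t.symm a : ℕ))) := by
  intro a b
  constructor
  · intro hp
    exact hg hp
  · intro hlt
    exact hg.lt_iff_gt.mp hlt

private lemma EU_split {m : ℕ} (Bf p : Fin m → ℝ) (c d : Fin m) (ε δ : ℝ) :
    EU (fun a => Bf a + (if a = c then ε else 0) + (if a = d then δ else 0)) p
      = (∑ a, Bf a * p a) + ε * p c + δ * p d := by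
  simp [EU, add_mul, Finset.sum_add_distrib, ite_mul, zero_mul, Finset.sum_ite_eq']

/-- strategyproofness implies lower invariance. -/
theorem sp_implies_lowerInvariant {n m : ℕ} (q : Fin m → ℕ) (hq : n ≤ ∑ j, q j)
    (f : (Fin n → Pref m) → Fin n → Fin m → ℝ) (hf : ValidAlloc q f)
    (hsp : Strategyproof f) : LowerInvariant f := by
  intro i t k h j hpref
  set k1 : Fin m := ⟨k.val + 1, h⟩ with hk1
  set t' : Pref m := swapRanks (t i) k k1 with ht'
  set s : Fin n → Pref m := Function.update t i t' with hs
  set p : Fin m → ℝ := f t i with hp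
  set p' : Fin m → ℝ := f s i with hp'
  set r0 : Fin m := (t i).symm j with hr0def
  have hr0 : k.val + 1 < r0.val := by
    have := hpref
    simp only [Prefers, hr0def, Equiv.symm_apply_apply, Fin.lt_def, hk1] at this ⊢
    exact this
  -- basic object/rank facts
  have hk1val : (k1 : ℕ) = k.val + 1 := rfl
  have hkk1 : k ≠ k1 := by
    intro hcon; have := congrArg Fin.val hcon; omega
  have hr0k : r0 ≠ k := by
    intro hcon; have := congrArg Fin.val hcon; omega
  have hr0k1 : r0 ≠ k1 := by
    intro hcon; have := congrArg Fin.val hcon; omega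
  have hsymm' : ∀ a, t'.symm a = Equiv.swap k k1 ((t i).symm a) := by
    intro a; simp [ht', swapRanks]
  have hsi : s i = t' := Function.update_self i t' t
  have hupdate : Function.update s i (t i) = t := by
    rw [hs, Function.update_idem, Function.update_eq_self]
  -- the base utility
  set Bf : Fin m → ℝ := fun a =>
    if (((t i).symm a : ℕ)) ≤ (k : ℕ) then (m:ℝ) - ((t i).symm a : ℕ) - 1
    else (m:ℝ) - ((t i).symm a : ℕ) with hBf
  set A : ℝ := (∑ a, Bf a * p' a) - (∑ a, Bf a * p a) with hA
  set D : ℝ := p' j - p j with hD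
  have key : ∀ δ : ℝ, -(1/2) < δ → δ < 1/2 → A + δ * D = 0 := by
    intro δ hδ1 hδ2
    have h1 : A + δ * D ≤ 0 := by
      apply eps_lemma _ (p' ((t i) k) - p ((t i) k))
      intro ε hε0 hε1
      have hg := gfun_strictAnti m k.val r0.val ε δ hε0 hε1 hδ1 hδ2 hr0
      set u : Fin m → ℝ := fun a => gfun m k.val r0.val ε δ (((t i).symm a : ℕ)) with hu
      have hcons : Consistent (t i) u := consistent_comp (t i) _ hg
      have hsp1 := hsp i t t' u hcons
      have hueq : u = fun a => Bf a + (if a = (t i) k then ε else 0)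
          + (if a = j then δ else 0) := by
        funext a
        have e1 : (((t i).symm a : ℕ) = (k : ℕ)) ↔ a = (t i) k := by
          rw [Fin.val_eq_val, Equiv.symm_apply_eq]
        have e2 : (((t i).symm a : ℕ) = (r0 : ℕ)) ↔ a = j := by
          rw [Fin.val_eq_val, hr0def, (Equiv.injective _).eq_iff]
        simp only [hu, gfun, hBf, e1, e2]
      rw [hueq, ← hs, ← hp', ← hp, EU_split, EU_split] at hsp1
      have hDD : δ * D = δ * p' j - δ * p j := by rw [hD]; ring
      have hEE : ε * (p' ((t i) k) - p ((t i) k))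
          = ε * p' ((t i) k) - ε * p ((t i) k) := by ring
      linarith
    have h2 : -(A + δ * D) ≤ 0 := by
      apply eps_lemma _ (p ((t i) k1) - p' ((t i) k1))
      intro ε hε0 hε1
      have hg := gfun_strictAnti m k.val r0.val ε δ hε0 hε1 hδ1 hδ2 hr0
      set u : Fin m → ℝ := fun a => gfun m k.val r0.val ε δ ((t'.symm a : ℕ)) with hu
      have hcons : Consistent (s i) u := by
        rw [hsi]; exact consistent_comp t' _ hg
      have hsp2 := hsp i s (t i) u hcons
      rw [hupdate] at hsp2
      have hueq : u = fun a => Bf a + (if a = (t i) k1 then ε else 0)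
          + (if a = j then δ else 0) := by
        funext a
        rw [hu]
        simp only
        rw [hsymm' a]
        set r : Fin m := (t i).symm a with hr
        have har : a = (t i) r := (Equiv.apply_symm_apply _ a).symm
        by_cases h1 : r = k
        · have hsw : Equiv.swap k k1 r = k1 := by rw [h1, Equiv.swap_apply_left]
          have haK : a = (t i) k := by rw [har, h1]
          have haK1 : a ≠ (t i) k1 := by
            rw [haK]; exact fun hcon => hkk1 ((Equiv.injective _) hcon)
          have haj : a ≠ j := by
            rw [har, h1]
            intro hcon
            exact hr0k (by rw [hr0def, ← hcon, Equiv.symm_apply_apply])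
          rw [hsw]
          simp only [gfun, hBf, ← hr, h1, hk1val, if_neg haK1, if_neg haj]
          have c1 : ¬ ((k.val + 1) ≤ k.val) := by omega
          have c2 : ¬ ((k.val + 1) = k.val) := by omega
          have c3 : ¬ ((k.val + 1) = r0.val) := by omega
          have c4 : (k.val ≤ k.val) := le_refl _
          rw [if_neg c1, if_neg c2, if_neg c3, if_pos c4]
          push_cast
          ring
        · by_cases h2 : r = k1
          · have hsw : Equiv.swap k k1 r = k := by rw [h2, Equiv.swap_apply_right]
            have haK1 : a = (t i) k1 := by rw [har, h2]
            have haj : a ≠ j := by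
              rw [har, h2]
              intro hcon
              exact hr0k1 (by rw [hr0def, ← hcon, Equiv.symm_apply_apply])
            rw [hsw]
            simp only [gfun, hBf, ← hr, h2, hk1val, if_pos haK1, if_neg haj]
            split_ifs <;> (try (exfalso; omega)) <;> (push_cast; ring)
          · have hsw : Equiv.swap k k1 r = r := Equiv.swap_apply_of_ne_of_ne h1 h2
            have haK1 : a ≠ (t i) k1 := by
              rw [har]; exact fun hcon => h2 ((Equiv.injective _) hcon)
            have e2 : (a = j) ↔ ((r : ℕ) = (r0 : ℕ)) := by
              rw [Fin.val_eq_val, hr, hr0def, (Equiv.injective _).eq_iff]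
            have e1 : ¬ ((r : ℕ) = k.val) := fun hcon => h1 (Fin.val_eq_val r k |>.mp hcon)
            rw [hsw]
            simp only [gfun, hBf, ← hr, if_neg haK1, e2]
            split_ifs <;> (try (exfalso; omega)) <;> (push_cast; ring)
      rw [hueq, ← hp, ← hp', EU_split, EU_split] at hsp2
      have hDD : δ * D = δ * p' j - δ * p j := by rw [hD]; ring
      have hEE : ε * (p ((t i) k1) - p' ((t i) k1))
          = ε * p ((t i) k1) - ε * p' ((t i) k1) := by ring
      linarith
    linarith
  have e0 := key 0 (by norm_num) (by norm_num)
  have e1 := key (1/4) (by norm_num) (by norm_num)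
  have hDz : D = 0 := by linarith
  show p' j = p j
  rw [hD] at hDz
  linarith
end

section
/- If an ordinal one-sided matching mechanism is strategyproof, then it is swap monotonic: for any agent i swapping two adjacent objects a_k ≻ a_{k+1} in its report (to a_{k+1} ≻ a_k), either the agent's allocation vector is completely unchanged, or its probability for a_k strictly decreases and its probability for a_{k+1} strictly increases. -/
open Finset

def Sle {m : ℕ} (t : Pref m) (ℓ : Fin m) (q : Fin m → ℝ) : ℝ :=
  ∑ c ∈ Finset.univ.filter (fun c => t.symm c ≤ ℓ), q c

lemma nonneg_of_pos_eps (A B : ℝ) (h : ∀ ε : ℝ, 0 < ε → 0 ≤ A + ε * B) : 0 ≤ A := by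
  by_contra hA
  push_neg at hA
  rcases le_or_gt B 0 with hB | hB
  · have := h 1 one_pos; nlinarith
  · have h2 := h (-A / (2 * B)) (div_pos (by linarith) (by linarith))
    have h3 : (-A / (2 * B)) * B = -A / 2 := by field_simp
    rw [h3] at h2; linarith

lemma fosd_aux {m : ℕ} (t : Pref m) (p p' : Fin m → ℝ)
    (hsp : ∀ u, Consistent t u → EU u p' ≤ EU u p) (ℓ : Fin m) :
    Sle t ℓ p' ≤ Sle t ℓ p := by
  set K : (Fin m → ℝ) → ℝ := fun q => ∑ c, ((t.symm c : ℕ) : ℝ) * q c with hK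
  have key : ∀ ε : ℝ, 0 < ε → Sle t ℓ p' - ε * K p' ≤ Sle t ℓ p - ε * K p := by
    intro ε hε
    set u : Fin m → ℝ :=
      fun c => (if t.symm c ≤ ℓ then (1:ℝ) else 0) - ε * ((t.symm c : ℕ) : ℝ) with hu
    have hcons : Consistent t u := by
      intro a b
      unfold Prefers
      constructor
      · intro hab
        have h1 : ((t.symm a : ℕ) : ℝ) < ((t.symm b : ℕ) : ℝ) := by exact_mod_cast hab
        have h2 : (if t.symm b ≤ ℓ then (1:ℝ) else 0) ≤ (if t.symm a ≤ ℓ then 1 else 0) := by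
          split_ifs with hb2 ha2
          · exact le_rfl
          · exact absurd (le_trans (le_of_lt hab) hb2) ha2
          · norm_num
          · exact le_rfl
        simp only [hu]; nlinarith
      · intro hub
        by_contra hnot
        push_neg at hnot
        have h1 : ((t.symm b : ℕ) : ℝ) ≤ ((t.symm a : ℕ) : ℝ) := by exact_mod_cast hnot
        have h2 : (if t.symm a ≤ ℓ then (1:ℝ) else 0) ≤ (if t.symm b ≤ ℓ then 1 else 0) := by
          split_ifs with ha2 hb2
          · exact le_rfl
          · exact absurd (le_trans hnot ha2) hb2
          · norm_num
          · exact le_rfl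
        simp only [hu] at hub; nlinarith
    have hEU : ∀ q : Fin m → ℝ, EU u q = Sle t ℓ q - ε * K q := by
      intro q
      unfold EU Sle
      simp only [hu, hK, sub_mul]
      rw [Finset.sum_sub_distrib, Finset.mul_sum, Finset.sum_filter]
      congr 1
      · exact Finset.sum_congr rfl fun c _ => by rw [ite_mul, one_mul, zero_mul]
      · exact Finset.sum_congr rfl fun c _ => by ring
    have := hsp u hcons
    rw [hEU, hEU] at this
    exact this
  have h0 : 0 ≤ (Sle t ℓ p - Sle t ℓ p') := by
    apply nonneg_of_pos_eps _ (K p' - K p)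
    intro ε hε
    have := key ε hε
    nlinarith
  linarith

lemma sle_eq {m : ℕ} (t : Pref m) (ℓ : Fin m) (q : Fin m → ℝ) :
    Sle t ℓ q = (∑ c ∈ Finset.univ.filter (fun c => t.symm c < ℓ), q c) + q (t ℓ) := by
  unfold Sle
  have hsplit : univ.filter (fun c => t.symm c ≤ ℓ)
      = insert (t ℓ) (univ.filter (fun c => t.symm c < ℓ)) := by
    ext c
    simp only [mem_insert, mem_filter, mem_univ, true_and]
    constructor
    · intro hc
      rcases hc.lt_or_eq with h' | h'
      · exact Or.inr h'
      · exact Or.inl (by rw [← h', t.apply_symm_apply])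
    · rintro (rfl | h')
      · simp
      · exact le_of_lt h'
  rw [hsplit, Finset.sum_insert (by simp)]
  ring

lemma slt_zero {m : ℕ} (t : Pref m) (ℓ : Fin m) (h : ℓ.val = 0) (q : Fin m → ℝ) :
    (∑ c ∈ Finset.univ.filter (fun c => t.symm c < ℓ), q c) = 0 := by
  rw [Finset.filter_false_of_mem, Finset.sum_empty]
  intro c _
  simp only [Fin.lt_def, h]
  omega

lemma slt_succ {m : ℕ} (t : Pref m) (ℓ ℓ' : Fin m) (h : ℓ'.val + 1 = ℓ.val) (q : Fin m → ℝ) :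
    (∑ c ∈ Finset.univ.filter (fun c => t.symm c < ℓ), q c) = Sle t ℓ' q := by
  unfold Sle
  congr 1
  ext c
  simp only [mem_filter, mem_univ, true_and, Fin.lt_def, Fin.le_def]
  omega

lemma swap_le_iff {m : ℕ} (k k1 ℓ x : Fin m) (hk1 : k.val + 1 = k1.val) (hℓ : ℓ ≠ k) :
    Equiv.swap k k1 x ≤ ℓ ↔ x ≤ ℓ := by
  have hℓv : ℓ.val ≠ k.val := fun hh => hℓ (Fin.ext hh)
  rcases eq_or_ne x k with rfl | hx
  · rw [Equiv.swap_apply_left]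
    simp only [Fin.le_def]
    omega
  rcases eq_or_ne x k1 with rfl | hx1
  · rw [Equiv.swap_apply_right]
    simp only [Fin.le_def]
    omega
  · rw [Equiv.swap_apply_of_ne_of_ne hx hx1]

lemma sle_swap {m : ℕ} (t : Pref m) (k k1 ℓ : Fin m) (hk1 : k.val + 1 = k1.val) (hℓ : ℓ ≠ k)
    (q : Fin m → ℝ) : Sle (swapRanks t k k1) ℓ q = Sle t ℓ q := by
  unfold Sle
  congr 1
  ext c
  simp only [mem_filter, mem_univ, true_and, swapRanks, Equiv.symm_trans_apply, Equiv.symm_swap]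
  exact (Finset.mem_filter.trans (and_iff_right (Finset.mem_univ _))).trans
    (swap_le_iff k k1 ℓ (t.symm c) hk1 hℓ)

/-- strategyproofness implies swap monotonicity. -/
theorem sp_implies_swapMonotonic {n m : ℕ} (q : Fin m → ℕ) (hq : n ≤ ∑ j, q j)
    (f : (Fin n → Pref m) → Fin n → Fin m → ℝ) (hf : ValidAlloc q f)
    (hsp : Strategyproof f) : SwapMonotonic f := by
  intro i t k h
  set t0 := t i with ht0
  set k1 : Fin m := ⟨k.val + 1, h⟩ with hk1
  set ts := swapRanks t0 k k1 with hts
  set p : Fin m → ℝ := f t i with hp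
  set p' : Fin m → ℝ := f (Function.update t i ts) i with hp'
  have hk1v : k.val + 1 = k1.val := rfl
  have hk1ne : k1 ≠ k := Fin.ne_of_val_ne (by omega)
  have hA : ∀ ℓ, Sle t0 ℓ p' ≤ Sle t0 ℓ p :=
    fosd_aux t0 p p' (fun u hu => hsp i t ts u hu)
  have hsp' : ∀ u, Consistent ts u → EU u p ≤ EU u p' := by
    intro u hu
    have h2 := hsp i (Function.update t i ts) (t i) u
      (by rwa [Function.update_self])
    rwa [Function.update_idem, Function.update_eq_self] at h2
  have hA' : ∀ ℓ, Sle ts ℓ p ≤ Sle ts ℓ p' := fosd_aux ts p' p hsp'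
  have hEq : ∀ ℓ, ℓ ≠ k → Sle t0 ℓ p = Sle t0 ℓ p' := by
    intro ℓ hℓ
    have h1 := hA ℓ
    have h2 := hA' ℓ
    rw [hts, sle_swap t0 k k1 ℓ hk1v hℓ, sle_swap t0 k k1 ℓ hk1v hℓ] at h2
    linarith
  set d := Sle t0 k p - Sle t0 k p' with hd
  have hd0 : 0 ≤ d := sub_nonneg.2 (hA k)
  have ha : p (t0 k) - p' (t0 k) = d := by
    rcases Nat.eq_zero_or_pos k.val with h0 | h0
    · have e1 := sle_eq t0 k p
      have e2 := sle_eq t0 k p'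
      rw [slt_zero t0 k h0] at e1 e2
      simp only [hd]
      linarith
    · set k' : Fin m := ⟨k.val - 1, by omega⟩ with hk'
      have hk'k : k' ≠ k := Fin.ne_of_val_ne (by simp [hk']; omega)
      have e1 := sle_eq t0 k p
      have e2 := sle_eq t0 k p'
      rw [slt_succ t0 k k' (by simp [hk']; omega)] at e1 e2
      have e3 := hEq k' hk'k
      simp only [hd]
      linarith
  have hb : p' (t0 k1) - p (t0 k1) = d := by
    have e1 := sle_eq t0 k1 p
    have e2 := sle_eq t0 k1 p'
    rw [slt_succ t0 k1 k hk1v] at e1 e2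
    have e3 := hEq k1 hk1ne
    simp only [hd]
    linarith
  have hother : ∀ j : Fin m, t0.symm j ≠ k → t0.symm j ≠ k1 → p' j = p j := by
    intro j hjk hjk1
    have hjt : t0 (t0.symm j) = j := t0.apply_symm_apply j
    rcases Nat.eq_zero_or_pos (t0.symm j).val with h0 | h0
    · have e1 := sle_eq t0 (t0.symm j) p
      have e2 := sle_eq t0 (t0.symm j) p'
      rw [slt_zero t0 _ h0] at e1 e2
      rw [hjt] at e1 e2
      have e3 := hEq _ hjk
      linarith
    · set ℓ' : Fin m := ⟨(t0.symm j).val - 1, by omega⟩ with hℓ'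
      have hℓ'k : ℓ' ≠ k := by
        intro hh
        apply hjk1
        apply Fin.ext
        have : ℓ'.val = k.val := by rw [hh]
        simp [hℓ'] at this
        simp [hk1]
        omega
      have e1 := sle_eq t0 (t0.symm j) p
      have e2 := sle_eq t0 (t0.symm j) p'
      rw [slt_succ t0 _ ℓ' (by simp [hℓ']; omega)] at e1 e2
      rw [hjt] at e1 e2
      have e3 := hEq _ hjk
      have e4 := hEq ℓ' hℓ'k
      linarith
  rcases eq_or_lt_of_le hd0 with hdeq | hdlt
  · left
    intro j
    rcases eq_or_ne (t0.symm j) k with hjk | hjk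
    · have hj : j = t0 k := by rw [← hjk, t0.apply_symm_apply]
      rw [hj]
      linarith
    rcases eq_or_ne (t0.symm j) k1 with hjk1 | hjk1
    · have hj : j = t0 k1 := by rw [← hjk1, t0.apply_symm_apply]
      rw [hj]
      linarith
    · exact hother j hjk hjk1
  · right
    constructor
    · linarith
    · linarith
end

section
/- An ordinal one-sided matching mechanism is strategyproof if and only if it is swap monotonic, upper invariant, and lower invariant. -/
open Finset

section AuxSP

lemma eps_le (S C : ℝ) (h : ∀ ε : ℝ, 0 < ε → 0 ≤ S - ε * C) : 0 ≤ S := by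
  by_contra h'
  push_neg at h'
  rcases lt_trichotomy C 0 with hC | hC | hC
  · have h2 := h (S / (2 * C)) (div_pos_of_neg_of_neg h' (by linarith))
    have hC0 : C ≠ 0 := ne_of_lt hC
    have h3 : (S / (2 * C)) * C = S / 2 := by
      field_simp
    rw [h3] at h2; linarith
  · have := h 1 one_pos; rw [hC] at this; linarith
  · have h2 := h (-S / (2 * C)) (div_pos (by linarith) (by linarith))
    have hC0 : C ≠ 0 := ne_of_gt hC
    have h3 : (-S / (2 * C)) * C = -S / 2 := by
      field_simp
    rw [h3] at h2; linarith

lemma consistent_comp_s3 {m : ℕ} (t : Pref m) (v : Fin m → ℝ) (hv : StrictAnti v) :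
    Consistent t (v ∘ t.symm) := by
  intro a b
  simpa [Prefers, Function.comp] using (hv.lt_iff_gt (a := t.symm b) (b := t.symm a)).symm

lemma partial_nonneg {m : ℕ} (D : Fin m → ℝ)
    (hv : ∀ v : Fin m → ℝ, StrictAnti v → 0 ≤ ∑ r, v r * D r) (l : ℕ) :
    0 ≤ ∑ r ∈ univ.filter (fun r : Fin m => (r : ℕ) < l), D r := by
  apply eps_le _ (∑ r : Fin m, ((r : ℕ) : ℝ) * D r)
  intro ε hε
  have hsa : StrictAnti (fun r : Fin m =>
      (if (r : ℕ) < l then (1 : ℝ) else 0) - ε * ((r : ℕ) : ℝ)) := by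
    intro r s hrs
    have hrs' : (r : ℕ) < (s : ℕ) := hrs
    have h1 : (if (s : ℕ) < l then (1 : ℝ) else 0) ≤ (if (r : ℕ) < l then (1 : ℝ) else 0) := by
      split_ifs with hA hB <;> norm_num <;> omega
    have h2 : ε * ((r : ℕ) : ℝ) < ε * ((s : ℕ) : ℝ) :=
      mul_lt_mul_of_pos_left (by exact_mod_cast hrs') hε
    dsimp only
    linarith
  have key := hv _ hsa
  have hsum : ∑ r : Fin m, ((if (r : ℕ) < l then (1 : ℝ) else 0) - ε * ((r : ℕ) : ℝ)) * D r
      = (∑ r ∈ univ.filter (fun r : Fin m => (r : ℕ) < l), D r)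
        - ε * ∑ r : Fin m, ((r : ℕ) : ℝ) * D r := by
    rw [Finset.sum_filter, Finset.mul_sum, ← Finset.sum_sub_distrib]
    refine Finset.sum_congr rfl fun r _ => ?_
    split_ifs <;> ring
  rw [hsum] at key
  linarith

lemma swap_lt {m : ℕ} (k : Fin m) (h : (k : ℕ) + 1 < m) {r s : Fin m} (hrs : r < s)
    (hne : ¬(r = k ∧ s = ⟨(k : ℕ) + 1, h⟩)) :
    Equiv.swap k ⟨(k : ℕ) + 1, h⟩ r < Equiv.swap k ⟨(k : ℕ) + 1, h⟩ s := by
  have hrs' : (r : ℕ) < (s : ℕ) := hrs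
  by_cases hrk : r = k
  · have hsk' : s ≠ ⟨(k : ℕ) + 1, h⟩ := fun hh => hne ⟨hrk, hh⟩
    have hsk : s ≠ k := by rw [← hrk]; exact (ne_of_lt hrs).symm
    rw [hrk, Equiv.swap_apply_left, Equiv.swap_apply_of_ne_of_ne hsk hsk']
    have h1 : (s : ℕ) ≠ (k : ℕ) + 1 := fun hh => hsk' (Fin.ext hh)
    have h2 : (k : ℕ) < (s : ℕ) := by rw [← congrArg Fin.val hrk]; exact hrs'
    exact Fin.lt_def.mpr (by simp only [] ; omega)
  · by_cases hrk' : r = ⟨(k : ℕ) + 1, h⟩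
    · have hrv : (r : ℕ) = (k : ℕ) + 1 := congrArg Fin.val hrk'
      have hsk : s ≠ k := fun hh => by
        have := congrArg Fin.val hh; omega
      have hsk' : s ≠ ⟨(k : ℕ) + 1, h⟩ := fun hh => by
        have := congrArg Fin.val hh
        simp only [] at this; omega
      rw [hrk', Equiv.swap_apply_right, Equiv.swap_apply_of_ne_of_ne hsk hsk']
      exact Fin.lt_def.mpr (by omega)
    · have hrv : (r : ℕ) ≠ (k : ℕ) := fun hh => hrk (Fin.ext hh)
      have hrv' : (r : ℕ) ≠ (k : ℕ) + 1 := fun hh => hrk' (Fin.ext hh)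
      rw [Equiv.swap_apply_of_ne_of_ne hrk hrk']
      by_cases hsk : s = k
      · have hsv : (s : ℕ) = (k : ℕ) := congrArg Fin.val hsk
        rw [hsk, Equiv.swap_apply_left]
        exact Fin.lt_def.mpr (by simp only []; omega)
      · by_cases hsk' : s = ⟨(k : ℕ) + 1, h⟩
        · have hsv : (s : ℕ) = (k : ℕ) + 1 := congrArg Fin.val hsk'
          rw [hsk', Equiv.swap_apply_right]
          exact Fin.lt_def.mpr (by omega)
        · rw [Equiv.swap_apply_of_ne_of_ne hsk hsk']
          exact hrs

lemma swapRanks_swapRanks {m : ℕ} (t : Pref m) (k k' : Fin m) :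
    swapRanks (swapRanks t k k') k k' = t := by
  ext r
  simp [swapRanks]

lemma swapRanks_apply_left {m : ℕ} (t : Pref m) (k k' : Fin m) :
    swapRanks t k k' k = t k' := by simp [swapRanks]

lemma swapRanks_apply_right {m : ℕ} (t : Pref m) (k k' : Fin m) :
    swapRanks t k k' k' = t k := by simp [swapRanks]

lemma swapRanks_symm_apply {m : ℕ} (t : Pref m) (k k' j : Fin m) :
    (swapRanks t k k').symm j = Equiv.swap k k' (t.symm j) := by
  simp [swapRanks]

lemma strictMono_fin_id {m : ℕ} {g : Fin m → Fin m} (hg : StrictMono g) : g = id := by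
  have hsurj : Function.Surjective g := Finite.surjective_of_injective hg.injective
  have hr : Set.range g = Set.range (id : Fin m → Fin m) := by
    rw [Set.range_id, Set.range_eq_univ]; exact hsurj
  have inst : WellFoundedLT (Fin m) := inferInstance
  exact (@StrictMono.range_inj (Fin m) (Fin m) _ _ inst g id hg (strictMono_id (α := Fin m))).1 hr

lemma strictMono_of_adj {m : ℕ} {g : Fin m → Fin m}
    (hadj : ∀ (a : ℕ) (ha : a + 1 < m), g ⟨a, by omega⟩ < g ⟨a + 1, ha⟩) : StrictMono g := by
  match m, g, hadj with
  | 0, g, hadj => exact fun a => absurd a.isLt (by omega)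
  | (n + 1), g, hadj =>
    rw [Fin.strictMono_iff_lt_succ]
    intro i
    have hi : (i : ℕ) + 1 < n + 1 := by omega
    have := hadj (i : ℕ) hi
    have e1 : (⟨(i : ℕ), by omega⟩ : Fin (n + 1)) = Fin.castSucc i := Fin.ext rfl
    have e2 : (⟨(i : ℕ) + 1, hi⟩ : Fin (n + 1)) = i.succ := Fin.ext rfl
    rwa [e1, e2] at this

def invs {m : ℕ} (σ ρ : Pref m) : ℕ :=
  (univ.filter (fun p : Fin m × Fin m => p.1 < p.2 ∧ σ.symm (ρ p.2) < σ.symm (ρ p.1))).card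

lemma invs_swap_lt {m : ℕ} (σ ρ : Pref m) (k : Fin m) (h : (k : ℕ) + 1 < m)
    (hinv : σ.symm (ρ ⟨(k : ℕ) + 1, h⟩) < σ.symm (ρ k)) :
    invs σ (swapRanks ρ k ⟨(k : ℕ) + 1, h⟩) < invs σ ρ := by
  set k' : Fin m := ⟨(k : ℕ) + 1, h⟩ with hk'
  set sw : Fin m ≃ Fin m := Equiv.swap k k' with hsw
  set A := univ.filter (fun p : Fin m × Fin m => p.1 < p.2 ∧ σ.symm (ρ p.2) < σ.symm (ρ p.1))
    with hA
  set ρ' := swapRanks ρ k k' with hρ'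
  set A' := univ.filter (fun p : Fin m × Fin m => p.1 < p.2 ∧ σ.symm (ρ' p.2) < σ.symm (ρ' p.1))
    with hA'
  have hval : ∀ r : Fin m, ρ' r = ρ (sw r) := fun r => rfl
  have hkk' : k ≠ k' := by simp [hk', Fin.ext_iff]
  have hmem : (k, k') ∈ A := by
    simp only [hA, Finset.mem_filter, Finset.mem_univ, true_and]
    exact ⟨by simp [hk', Fin.lt_def], hinv⟩
  have hsub : A'.image (Prod.map sw sw) ⊆ A.erase (k, k') := by
    intro pq hpq
    rw [Finset.mem_image] at hpq
    obtain ⟨⟨r, s⟩, hrsA', hmap⟩ := hpq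
    simp only [hA', Finset.mem_filter, Finset.mem_univ, true_and] at hrsA'
    obtain ⟨hrs, hinvrs⟩ := hrsA'
    rw [hval, hval] at hinvrs
    have hne : ¬(r = k ∧ s = k') := by
      rintro ⟨h1, h2⟩
      rw [h1, h2, show sw k = k' from Equiv.swap_apply_left k k',
        show sw k' = k from Equiv.swap_apply_right k k'] at hinvrs
      exact absurd hinv (lt_asymm hinvrs)
    have hlt : sw r < sw s := swap_lt k h hrs hne
    rw [Finset.mem_erase]
    constructor
    · rw [← hmap]
      intro hcontra
      have h1 : sw r = k := congrArg Prod.fst hcontra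
      have h2 : sw s = k' := congrArg Prod.snd hcontra
      have hr : r = k' := by
        have := congrArg sw h1
        rwa [Equiv.swap_apply_self, show sw k = k' from Equiv.swap_apply_left k k'] at this
      have hs : s = k := by
        have := congrArg sw h2
        rwa [Equiv.swap_apply_self, show sw k' = k from Equiv.swap_apply_right k k'] at this
      rw [hr, hs] at hrs
      exact absurd hrs (by simp [hk', Fin.lt_def])
    · rw [← hmap]
      simp only [hA, Finset.mem_filter, Finset.mem_univ, true_and, Prod.map]
      exact ⟨hlt, hinvrs⟩
  have hinj : Function.Injective (Prod.map (sw : Fin m → Fin m) sw) :=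
    Function.Injective.prodMap sw.injective sw.injective
  calc invs σ ρ' = A'.card := rfl
    _ = (A'.image (Prod.map sw sw)).card := (Finset.card_image_of_injective _ hinj).symm
    _ ≤ (A.erase (k, k')).card := Finset.card_le_card hsub
    _ < A.card := Finset.card_erase_lt_of_mem hmem
    _ = invs σ ρ := rfl

lemma sp_master {n m : ℕ} {f : (Fin n → Pref m) → Fin n → Fin m → ℝ}
    (hsp : Strategyproof f) (i : Fin n) (t : Fin n → Pref m) (k : Fin m) (h : (k : ℕ) + 1 < m) :
    ∃ δ : ℝ, 0 ≤ δ ∧ ∀ j : Fin m,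
      f t i j - f (Function.update t i (swapRanks (t i) k ⟨(k : ℕ) + 1, h⟩)) i j
        = if (t i).symm j = k then δ
          else if (t i).symm j = ⟨(k : ℕ) + 1, h⟩ then -δ else 0 := by
  set σ := t i with hσ
  set k' : Fin m := ⟨(k : ℕ) + 1, h⟩ with hk'
  set τ := swapRanks σ k k' with hτ
  set p := f t i with hp
  set p' := f (Function.update t i τ) i with hp'
  set D : Fin m → ℝ := fun r => p (σ r) - p' (σ r) with hD
  have fam1 : ∀ v : Fin m → ℝ, StrictAnti v → 0 ≤ ∑ r, v r * D r := by
    intro v hv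
    have hcons := consistent_comp_s3 σ v hv
    have key := hsp i t τ (v ∘ σ.symm) hcons
    have hre : ∑ r : Fin m, v r * D r = EU (v ∘ σ.symm) p - EU (v ∘ σ.symm) p' := by
      unfold EU
      rw [← Finset.sum_sub_distrib,
        ← Equiv.sum_comp σ (fun j => (v ∘ σ.symm) j * p j - (v ∘ σ.symm) j * p' j)]
      refine Finset.sum_congr rfl fun r _ => ?_
      simp only [hD, Function.comp_apply, Equiv.symm_apply_apply]
      ring
    rw [hre]
    linarith
  have fam2 : ∀ v : Fin m → ℝ, StrictAnti v → (∑ r, v (Equiv.swap k k' r) * D r) ≤ 0 := by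
    intro v hv
    have hcons := consistent_comp_s3 τ v hv
    have hti : (Function.update t i τ) i = τ := Function.update_self i τ t
    have hup : Function.update (Function.update t i τ) i σ = t := by
      rw [Function.update_idem, hσ, Function.update_eq_self]
    have key := hsp i (Function.update t i τ) σ (v ∘ τ.symm) (by rw [hti]; exact hcons)
    rw [hup] at key
    have hre : ∑ r : Fin m, v (Equiv.swap k k' r) * D r
        = EU (v ∘ τ.symm) p - EU (v ∘ τ.symm) p' := by
      unfold EU
      rw [← Finset.sum_sub_distrib,
        ← Equiv.sum_comp σ (fun j => (v ∘ τ.symm) j * p j - (v ∘ τ.symm) j * p' j)]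
      refine Finset.sum_congr rfl fun r _ => ?_
      have hτs : τ.symm (σ r) = Equiv.swap k k' r := by
        rw [hτ, swapRanks_symm_apply, Equiv.symm_apply_apply]
      simp only [hD, Function.comp_apply, hτs]
      ring
    rw [hre]
    linarith
  set S : ℕ → ℝ := fun l => ∑ r ∈ univ.filter (fun r : Fin m => (r : ℕ) < l), D r with hS
  have hSnn : ∀ l, 0 ≤ S l := fun l => partial_nonneg D fam1 l
  have hTnp : ∀ l, (∑ r ∈ univ.filter (fun r : Fin m => (r : ℕ) < l),
      D (Equiv.swap k k' r)) ≤ 0 := by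
    intro l
    have hv2 : ∀ v : Fin m → ℝ, StrictAnti v →
        0 ≤ ∑ r, v r * (-(D (Equiv.swap k k' r))) := by
      intro v hv
      have e1 : ∑ r : Fin m, v r * D (Equiv.swap k k' r)
          = ∑ r : Fin m, v (Equiv.swap k k' r) * D r := by
        rw [← Equiv.sum_comp (Equiv.swap k k') (fun r => v (Equiv.swap k k' r) * D r)]
        refine Finset.sum_congr rfl fun r _ => ?_
        rw [Equiv.swap_apply_self]
      have e2 : ∑ r : Fin m, v r * (-(D (Equiv.swap k k' r)))
          = -(∑ r : Fin m, v r * D (Equiv.swap k k' r)) := by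
        rw [← Finset.sum_neg_distrib]
        exact Finset.sum_congr rfl fun r _ => by ring
      rw [e2, e1]
      have := fam2 v hv
      linarith
    have := partial_nonneg (fun r => -(D (Equiv.swap k k' r))) hv2 l
    rw [Finset.sum_neg_distrib] at this
    linarith
  have hST : ∀ l, l ≠ (k : ℕ) + 1 →
      (∑ r ∈ univ.filter (fun r : Fin m => (r : ℕ) < l), D (Equiv.swap k k' r)) = S l := by
    intro l hl
    refine Finset.sum_equiv (Equiv.swap k k') (fun r => ?_) (fun r _ => rfl)
    simp only [Finset.mem_filter, Finset.mem_univ, true_and]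
    by_cases hrk : r = k
    · rw [hrk, Equiv.swap_apply_left]
      show (k : ℕ) < l ↔ (k : ℕ) + 1 < l
      omega
    · by_cases hrk' : r = k'
      · rw [hrk', Equiv.swap_apply_right]
        show (k : ℕ) + 1 < l ↔ (k : ℕ) < l
        omega
      · rw [Equiv.swap_apply_of_ne_of_ne hrk hrk']
  have hS0 : ∀ l, l ≠ (k : ℕ) + 1 → S l = 0 := fun l hl =>
    le_antisymm (by rw [← hST l hl]; exact hTnp l) (hSnn l)
  have hDr : ∀ r : Fin m, D r = S ((r : ℕ) + 1) - S (r : ℕ) := by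
    intro r
    have hnot : r ∉ univ.filter (fun s : Fin m => (s : ℕ) < (r : ℕ)) := by simp
    have hins : univ.filter (fun s : Fin m => (s : ℕ) < (r : ℕ) + 1)
        = insert r (univ.filter (fun s : Fin m => (s : ℕ) < (r : ℕ))) := by
      ext s
      simp only [Finset.mem_filter, Finset.mem_univ, true_and, Finset.mem_insert]
      constructor
      · intro hs
        rcases Nat.lt_succ_iff_lt_or_eq.mp hs with h1 | h1
        · exact Or.inr h1
        · exact Or.inl (Fin.ext h1)
      · rintro (rfl | h1)
        · omega
        · omega
    simp only [hS]
    rw [hins, Finset.sum_insert hnot]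
    ring
  refine ⟨S ((k : ℕ) + 1), hSnn _, fun j => ?_⟩
  have hj : p j - p' j = D (σ.symm j) := by
    simp only [hD, Equiv.apply_symm_apply]
  rw [hj]
  by_cases hrk : σ.symm j = k
  · rw [hrk, if_pos rfl, hDr k, hS0 (k : ℕ) (by omega)]
    ring
  · rw [if_neg hrk]
    by_cases hrk' : σ.symm j = k'
    · rw [hrk', if_pos rfl, hDr k']
      have hv : ((k' : Fin m) : ℕ) = (k : ℕ) + 1 := rfl
      rw [hv, hS0 ((k : ℕ) + 1 + 1) (by omega)]
      ring
    · rw [if_neg hrk']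
      have h1 : (σ.symm j : ℕ) ≠ (k : ℕ) := fun hh => hrk (Fin.ext hh)
      have h2 : (σ.symm j : ℕ) ≠ (k : ℕ) + 1 := fun hh => hrk' (Fin.ext hh)
      rw [hDr (σ.symm j), hS0 ((σ.symm j : ℕ) + 1) (by omega), hS0 (σ.symm j : ℕ) (by omega)]
      ring

lemma step_lemma {n m : ℕ} {q : Fin m → ℕ} {f : (Fin n → Pref m) → Fin n → Fin m → ℝ}
    (hf : ValidAlloc q f) (hsm : SwapMonotonic f) (hui : UpperInvariant f)
    (hli : LowerInvariant f) (i : Fin n) (t : Fin n → Pref m) (u : Fin m → ℝ)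
    (ρ : Pref m) (k : Fin m) (h : (k : ℕ) + 1 < m)
    (hu : u (ρ ⟨(k : ℕ) + 1, h⟩) ≤ u (ρ k)) :
    EU u (f (Function.update t i (swapRanks ρ k ⟨(k : ℕ) + 1, h⟩)) i)
      ≤ EU u (f (Function.update t i ρ) i) := by
  set k' : Fin m := ⟨(k : ℕ) + 1, h⟩ with hk'
  set T := Function.update t i ρ with hT
  have hTi : T i = ρ := Function.update_self i ρ t
  set x := ρ k with hx
  set y := ρ k' with hy
  have hkk' : k ≠ k' := by
    intro hh
    have := congrArg Fin.val hh
    simp only [hk'] at this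
    omega
  have hxy : x ≠ y := fun hh => hkk' (ρ.injective hh)
  set p := f T i with hp
  set p' := f (Function.update t i (swapRanks ρ k k')) i with hp'
  have hup : Function.update T i (swapRanks ρ k k') = Function.update t i (swapRanks ρ k k') :=
    Function.update_idem ..
  have heq : ∀ j, j ≠ x → j ≠ y → p' j = p j := by
    intro j hjx hjy
    have hrk : ρ.symm j ≠ k := fun hh => hjx (by rw [hx, ← hh, Equiv.apply_symm_apply])
    have hrk' : ρ.symm j ≠ k' := fun hh => hjy (by rw [hy, ← hh, Equiv.apply_symm_apply])
    rcases lt_trichotomy (ρ.symm j) k with hlt | heqq | hgt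
    · have hpref : Prefers (T i) j ((T i) k) := by
        rw [hTi]
        show ρ.symm j < ρ.symm (ρ k)
        rwa [Equiv.symm_apply_apply]
      have := hui i T k h j hpref
      rw [hTi, hup] at this
      exact this
    · exact absurd heqq hrk
    · have hgt' : k' < ρ.symm j := by
        have h1 : (k : ℕ) < (ρ.symm j : ℕ) := hgt
        have h2 : (ρ.symm j : ℕ) ≠ (k : ℕ) + 1 := fun hh => hrk' (Fin.ext hh)
        exact Fin.lt_def.mpr (by simp only [hk']; omega)
      have hpref : Prefers (T i) ((T i) k') j := by
        rw [hTi]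
        show ρ.symm (ρ k') < ρ.symm j
        rwa [Equiv.symm_apply_apply]
      have := hli i T k h j hpref
      rw [hTi, hup] at this
      exact this
  have hsump : ∑ j, p j = 1 := (hf T).2.1 i
  have hsump' : ∑ j, p' j = 1 := by
    have := (hf (Function.update t i (swapRanks ρ k k'))).2.1 i
    exact this
  rcases hsm i T k h with hall | ⟨hlt1, hlt2⟩
  · have hpp : p' = p := by
      funext j
      have := hall j
      rw [hTi, hup] at this
      exact this
    rw [hpp]
  · rw [hTi, hup] at hlt1 hlt2
    have hpair : (p' x - p x) + (p' y - p y) = 0 := by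
      have h0 : ∑ j, (p' j - p j) = 0 := by
        rw [Finset.sum_sub_distrib, hsump, hsump']
        ring
      have h2 : ∑ j ∈ ({x, y} : Finset (Fin m)), (p' j - p j) = ∑ j, (p' j - p j) := by
        apply Finset.sum_subset (Finset.subset_univ _)
        intro j _ hj
        simp only [Finset.mem_insert, Finset.mem_singleton, not_or] at hj
        rw [heq j hj.1 hj.2]
        ring
      rw [h0, Finset.sum_pair hxy] at h2
      exact h2
    have hEU : EU u p' - EU u p = u x * (p' x - p x) + u y * (p' y - p y) := by
      unfold EU
      rw [← Finset.sum_sub_distrib]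
      have h2 : ∑ j ∈ ({x, y} : Finset (Fin m)), (u j * p' j - u j * p j)
          = ∑ j, (u j * p' j - u j * p j) := by
        apply Finset.sum_subset (Finset.subset_univ _)
        intro j _ hj
        simp only [Finset.mem_insert, Finset.mem_singleton, not_or] at hj
        rw [heq j hj.1 hj.2]
        ring
      rw [← h2, Finset.sum_pair hxy]
      ring
    have hlt1' : p' x < p x := hlt1
    have hlt2' : p y < p' y := hlt2
    have hprod : 0 ≤ (u x - u y) * (p x - p' x) :=
      mul_nonneg (by linarith) (by linarith)
    have hB : p' y - p y = p x - p' x := by linarith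
    have hfin : EU u p' - EU u p ≤ 0 := by
      rw [hEU, hB, show u x * (p' x - p x) + u y * (p x - p' x)
        = -((u x - u y) * (p x - p' x)) by ring]
      linarith
    linarith

end AuxSP

/-- a mechanism is strategyproof iff it is swap monotonic, upper invariant,
and lower invariant. -/
theorem sp_iff_axioms {n m : ℕ} (q : Fin m → ℕ) (hq : n ≤ ∑ j, q j)
    (f : (Fin n → Pref m) → Fin n → Fin m → ℝ) (hf : ValidAlloc q f) :
    Strategyproof f ↔ (SwapMonotonic f ∧ UpperInvariant f ∧ LowerInvariant f) := by
  constructor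
  · intro hsp
    refine ⟨?_, ?_, ?_⟩
    · intro i t k h
      obtain ⟨δ, hδ, hd⟩ := sp_master hsp i t k h
      rcases hδ.eq_or_lt with heq | hpos
      · left
        intro j
        have hdj := hd j
        rw [← heq] at hdj
        split_ifs at hdj <;> linarith
      · right
        constructor
        · have hdj := hd ((t i) k)
          rw [Equiv.symm_apply_apply, if_pos rfl] at hdj
          linarith
        · have hdj := hd ((t i) ⟨(k : ℕ) + 1, h⟩)
          rw [Equiv.symm_apply_apply] at hdj
          have hne : (⟨(k : ℕ) + 1, h⟩ : Fin m) ≠ k := fun hh => by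
            have := congrArg Fin.val hh
            simp only [] at this
            omega
          rw [if_neg hne, if_pos rfl] at hdj
          linarith
    · intro i t k h j hpref
      obtain ⟨δ, hδ, hd⟩ := sp_master hsp i t k h
      have hdj := hd j
      have hlt : (t i).symm j < k := by
        have h0 : (t i).symm j < (t i).symm ((t i) k) := hpref
        rwa [Equiv.symm_apply_apply] at h0
      have h1 : (t i).symm j ≠ k := ne_of_lt hlt
      have h2 : (t i).symm j ≠ ⟨(k : ℕ) + 1, h⟩ := fun hh => by
        have hv : ((t i).symm j : ℕ) < (k : ℕ) := hlt
        have := congrArg Fin.val hh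
        simp only [] at this
        omega
      rw [if_neg h1, if_neg h2] at hdj
      linarith
    · intro i t k h j hpref
      obtain ⟨δ, hδ, hd⟩ := sp_master hsp i t k h
      have hdj := hd j
      have hlt : (⟨(k : ℕ) + 1, h⟩ : Fin m) < (t i).symm j := by
        have h0 : (t i).symm ((t i) ⟨(k : ℕ) + 1, h⟩) < (t i).symm j := hpref
        rwa [Equiv.symm_apply_apply] at h0
      have hv : (k : ℕ) + 1 < ((t i).symm j : ℕ) := hlt
      have h1 : (t i).symm j ≠ k := fun hh => by
        have := congrArg Fin.val hh
        omega
      have h2 : (t i).symm j ≠ ⟨(k : ℕ) + 1, h⟩ := fun hh => by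
        have := congrArg Fin.val hh
        simp only [] at this
        omega
      rw [if_neg h1, if_neg h2] at hdj
      linarith
  · rintro ⟨hsm, hui, hli⟩
    intro i t t' u hu
    have main : ∀ N : ℕ, ∀ ρ : Pref m, invs (t i) ρ ≤ N →
        EU u (f (Function.update t i ρ) i) ≤ EU u (f t i) := by
      intro N
      induction N using Nat.strong_induction_on with
      | _ N ih =>
        intro ρ hρ
        by_cases hρσ : ρ = t i
        · rw [hρσ, Function.update_eq_self]
        · have hex : ∃ (k : Fin m) (hk : (k : ℕ) + 1 < m),
              (t i).symm (ρ ⟨(k : ℕ) + 1, hk⟩) < (t i).symm (ρ k) := by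
            by_contra hc
            push_neg at hc
            apply hρσ
            have hadj : ∀ (a : ℕ) (ha : a + 1 < m),
                (fun r => (t i).symm (ρ r)) ⟨a, by omega⟩
                  < (fun r => (t i).symm (ρ r)) ⟨a + 1, ha⟩ := by
              intro a ha
              have hle := hc ⟨a, by omega⟩ ha
              have hne : (t i).symm (ρ ⟨a, by omega⟩) ≠ (t i).symm (ρ ⟨a + 1, ha⟩) := by
                intro hh
                have h3 := ρ.injective ((t i).symm.injective hh)
                have h4 := congrArg Fin.val h3
                simp only [] at h4
                omega
              exact lt_of_le_of_ne hle hne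
            have hmono := strictMono_of_adj (g := fun r => (t i).symm (ρ r)) hadj
            have hid := strictMono_fin_id hmono
            apply Equiv.ext
            intro r
            have h1 : (t i).symm (ρ r) = r := congrFun hid r
            have h2 := congrArg (t i) h1
            rwa [Equiv.apply_symm_apply] at h2
          obtain ⟨k, hk, hinv⟩ := hex
          set ρ' := swapRanks ρ k ⟨(k : ℕ) + 1, hk⟩ with hρ'def
          have hdec := invs_swap_lt (t i) ρ k hk hinv
          have h1 : EU u (f (Function.update t i ρ') i) ≤ EU u (f t i) :=
            ih (invs (t i) ρ') (lt_of_lt_of_le hdec hρ) ρ' le_rfl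
          have hux : u (ρ' ⟨(k : ℕ) + 1, hk⟩) ≤ u (ρ' k) := by
            rw [hρ'def, swapRanks_apply_left, swapRanks_apply_right]
            have := (hu (ρ ⟨(k : ℕ) + 1, hk⟩) (ρ k)).mp hinv
            linarith
          have h2 := step_lemma hf hsm hui hli i t u ρ' k hk hux
          rw [hρ'def, swapRanks_swapRanks] at h2
          exact le_trans h2 h1
    exact main (invs (t i) t') t' le_rfl
end

section
/- If a mechanism is swap monotonic, upper invariant, and lower invariant, then for any agent whose true type and misreport differ only by a swap of two adjacent objects a ≻ b (true) versus b ≻ a (misreport), and any utility u consistent with the true type, the expected utility from truthful reporting is at least that from the misreport. -/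
open Finset

/-- under swap monotonicity, upper and lower invariance, no adjacent swap is
a profitable misreport for any consistent utility. -/
theorem axioms_imply_local_sp {n m : ℕ} (q : Fin m → ℕ) (hq : n ≤ ∑ j, q j)
    (f : (Fin n → Pref m) → Fin n → Fin m → ℝ) (hf : ValidAlloc q f)
    (hsm : SwapMonotonic f) (hui : UpperInvariant f) (hli : LowerInvariant f) :
    ∀ (i : Fin n) (t : Fin n → Pref m) (k : Fin m) (h : k.val + 1 < m) (u : Fin m → ℝ),
      Consistent (t i) u →
      EU u (f (Function.update t i (swapRanks (t i) k ⟨k.val + 1, h⟩)) i) ≤ EU u (f t i) := by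
  intro i t k h u hu
  set k' : Fin m := ⟨k.val + 1, h⟩ with hk'
  set a := t i k with ha
  set b := t i k' with hb
  set t' := Function.update t i (swapRanks (t i) k k') with ht'
  rcases hsm i t k h with heq | ⟨hlt, hgt⟩
  · exact le_of_eq (Finset.sum_congr rfl fun j _ => by rw [heq j])
  · set p := f t i with hp
    set p' := f t' i with hp'
    have hk_ne : k ≠ k' := by
      intro he
      have : (k : ℕ) = (k : ℕ) + 1 := congrArg Fin.val he
      omega
    have hab : a ≠ b := fun hh => hk_ne ((t i).injective hh)
    have hoff : ∀ j, j ≠ a → j ≠ b → p' j = p j := by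
      intro j hja hjb
      rcases lt_trichotomy ((t i).symm j) k with h1 | h1 | h1
      · exact hui i t k h j (by simpa [Prefers] using h1)
      · exact absurd (show j = a by rw [ha, ← h1, Equiv.apply_symm_apply]) hja
      · have h2 : k' < (t i).symm j := by
          rcases eq_or_lt_of_le (show k' ≤ (t i).symm j by
            simp only [hk', Fin.le_def]; exact h1) with h3 | h3
          · exact absurd (show j = b by rw [hb, h3, Equiv.apply_symm_apply]) hjb
          · exact h3
        exact hli i t k h j (by simpa [Prefers] using h2)
    have hsump : ∑ j, p j = 1 := (hf t).2.1 i
    have hsump' : ∑ j, p' j = 1 := (hf t').2.1 i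
    have hz0 : ∀ j ∈ Finset.univ, j ∉ ({a, b} : Finset (Fin m)) →
        p j - p' j = 0 := by
      intro j _ hj
      simp only [Finset.mem_insert, Finset.mem_singleton, not_or] at hj
      rw [hoff j hj.1 hj.2]; ring
    have e0 : ∑ j ∈ ({a, b} : Finset (Fin m)), (p j - p' j) = 0 := by
      rw [Finset.sum_subset (Finset.subset_univ _) hz0, Finset.sum_sub_distrib,
        hsump, hsump']; ring
    rw [Finset.sum_pair hab] at e0
    have hz1 : ∀ j ∈ Finset.univ, j ∉ ({a, b} : Finset (Fin m)) →
        u j * p j - u j * p' j = 0 := by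
      intro j _ hj
      simp only [Finset.mem_insert, Finset.mem_singleton, not_or] at hj
      rw [hoff j hj.1 hj.2]; ring
    have e1 : ∑ j ∈ ({a, b} : Finset (Fin m)), (u j * p j - u j * p' j)
        = ∑ j, (u j * p j - u j * p' j) :=
      Finset.sum_subset (Finset.subset_univ _) hz1
    rw [Finset.sum_pair hab] at e1
    have hkk : k < k' := Fin.lt_def.mpr (Nat.lt_succ_self _)
    have hub : u b < u a := (hu a b).mp (by
      show (t i).symm a < (t i).symm b
      rw [ha, hb, Equiv.symm_apply_apply, Equiv.symm_apply_apply]; exact hkk)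
    have hlt' : p' a < p a := hlt
    have hgt' : p b < p' b := hgt
    have key : 0 ≤ ∑ j, (u j * p j - u j * p' j) := by
      rw [← e1]
      have h2 : u b * p b - u b * p' b = u b * -(p a - p' a) := by
        have hd : p b - p' b = -(p a - p' a) := by linarith
        calc u b * p b - u b * p' b = u b * (p b - p' b) := by ring
          _ = u b * -(p a - p' a) := by rw [hd]
      rw [h2]
      nlinarith [mul_pos (sub_pos.mpr hub) (sub_pos.mpr hlt')]
    have : EU u p' ≤ EU u p := by
      unfold EU
      have := Finset.sum_sub_distrib (s := (Finset.univ : Finset (Fin m)))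
        (f := fun j => u j * p j) (g := fun j => u j * p' j)
      linarith [key, this]
    exact this
end

section
/- If a mechanism f is swap monotonic and upper invariant, then there exists r ∈ (0,1] such that f is r-partially strategyproof. -/
open Finset

/-! ### Auxiliary material for the proof -/

private lemma umin_le' {m : ℕ} (u : Fin m → ℝ) (j : Fin m) : umin u ≤ u j :=
  csInf_le (Set.Finite.bddBelow (Set.finite_range u)) ⟨j, rfl⟩

private lemma eu_step {m : ℕ} (u P P' : Fin m → ℝ) (b : Fin m) (r : ℝ) (hr : 0 < r)
    (hP : ∀ j, 0 ≤ P j) (hP' : ∀ j, 0 ≤ P' j)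
    (hPs : ∑ j, P j = 1) (hP's : ∑ j, P' j = 1)
    (hub : ∀ j, j ≠ b → P' j ≠ P j → u j - umin u ≤ r * (u b - umin u))
    (hdrop : 2 * r ≤ P b - P' b) :
    EU u P' ≤ EU u P := by
  have hv : ∀ j, 0 ≤ u j - umin u := fun j => sub_nonneg.2 (umin_le' u j)
  have hrv : 0 ≤ r * (u b - umin u) := mul_nonneg hr.le (hv b)
  have expand : ∀ Q : Fin m → ℝ, (∑ j, Q j = 1) →
      EU u Q = (∑ j, Q j * (u j - umin u)) + umin u := by
    intro Q hQ
    have h1 : ∑ j, Q j * (u j - umin u) = (∑ j, u j * Q j) - (∑ j, Q j) * umin u := by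
      rw [Finset.sum_mul, ← Finset.sum_sub_distrib]
      exact Finset.sum_congr rfl fun j _ => by ring
    rw [EU, h1, hQ]; ring
  rw [expand P hPs, expand P' hP's]
  have hsplit : ∀ Q : Fin m → ℝ, (∑ j, Q j * (u j - umin u))
      = Q b * (u b - umin u) + ∑ j ∈ Finset.univ.erase b, Q j * (u j - umin u) :=
    fun Q => (Finset.add_sum_erase _ _ (Finset.mem_univ b)).symm
  rw [hsplit P, hsplit P']
  have hterm : ∀ j ∈ Finset.univ.erase b,
      P' j * (u j - umin u) - P j * (u j - umin u) ≤ P' j * (r * (u b - umin u)) := by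
    intro j hj
    have hjb := (Finset.mem_erase.1 hj).1
    by_cases he : P' j = P j
    · rw [he, sub_self]
      exact mul_nonneg (he ▸ hP' j) hrv
    · have hbound := hub j hjb he
      rcases le_or_gt (P' j) (P j) with hc | hc
      · nlinarith [hv j, hP' j]
      · nlinarith [hP j, hP' j, hv j]
  have hsum : (∑ j ∈ Finset.univ.erase b, P' j * (u j - umin u))
      - (∑ j ∈ Finset.univ.erase b, P j * (u j - umin u))
      ≤ (∑ j ∈ Finset.univ.erase b, P' j) * (r * (u b - umin u)) := by
    rw [← Finset.sum_sub_distrib, Finset.sum_mul]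
    exact Finset.sum_le_sum hterm
  have herase : ∑ j ∈ Finset.univ.erase b, P' j = 1 - P' b := by
    rw [Finset.sum_erase_eq_sub (Finset.mem_univ b), hP's]
  rw [herase] at hsum
  have h2 : (1 - P' b) * (r * (u b - umin u)) ≤ r * (u b - umin u) := by
    nlinarith only [hP' b, hrv]
  have h3 : P' b * (u b - umin u) ≤ P b * (u b - umin u) - 2 * r * (u b - umin u) := by
    nlinarith only [hdrop, hv b]
  nlinarith only [hsum, h2, h3, hrv]

/-- Potential function used in the bubble-sort induction. -/
private def Mmeas {m : ℕ} (σ τ : Pref m) : ℕ :=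
  ∑ ℓ : Fin m, (m - ℓ.val) * (τ.symm (σ ℓ)).val

private lemma meas_dec {m : ℕ} (σ τ τ₁ : Pref m) (L α k p : Fin m)
    (hLα : L < α) (hpk : p.val = k.val + 1)
    (hτL : τ.symm (σ L) = p) (hτ₁L : τ₁.symm (σ L) = k)
    (hτα : τ.symm (σ α) = k) (hτ₁α : τ₁.symm (σ α) = p)
    (hother : ∀ ℓ, ℓ ≠ L → ℓ ≠ α → τ₁.symm (σ ℓ) = τ.symm (σ ℓ)) :
    Mmeas σ τ₁ < Mmeas σ τ := by
  have hLne : L ≠ α := ne_of_lt hLα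
  have hsplit : ∀ F : Fin m → ℕ, (∑ ℓ, F ℓ)
      = F L + (F α + ∑ ℓ ∈ (Finset.univ.erase L).erase α, F ℓ) := by
    intro F
    rw [← Finset.add_sum_erase _ F (Finset.mem_univ L),
        ← Finset.add_sum_erase _ F (Finset.mem_erase.2 ⟨Ne.symm hLne, Finset.mem_univ α⟩)]
  rw [Mmeas, Mmeas, hsplit (fun ℓ => (m - ℓ.val) * (τ₁.symm (σ ℓ)).val),
    hsplit (fun ℓ => (m - ℓ.val) * (τ.symm (σ ℓ)).val)]
  have hrest : (∑ ℓ ∈ (Finset.univ.erase L).erase α, (m - ℓ.val) * (τ₁.symm (σ ℓ)).val)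
      = ∑ ℓ ∈ (Finset.univ.erase L).erase α, (m - ℓ.val) * (τ.symm (σ ℓ)).val := by
    refine Finset.sum_congr rfl fun ℓ hℓ => ?_
    have h1 := (Finset.mem_erase.1 hℓ).1
    have h2 := (Finset.mem_erase.1 (Finset.mem_erase.1 hℓ).2).1
    rw [hother ℓ h2 h1]
  rw [hrest, hτL, hτ₁L, hτα, hτ₁α]
  have e1 : (m - L.val) * p.val = (m - L.val) * k.val + (m - L.val) := by
    rw [hpk, Nat.mul_succ]
  have e2 : (m - α.val) * p.val = (m - α.val) * k.val + (m - α.val) := by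
    rw [hpk, Nat.mul_succ]
  rw [e1, e2]
  have hα : α.val < m := α.isLt
  have hLv : L.val < α.val := hLα
  have hlt : m - α.val < m - L.val := by omega
  generalize (m - L.val) * k.val = A
  generalize (m - α.val) * k.val = B
  omega

/-- swap monotonicity and upper invariance imply r-partial strategyproofness
for some r ∈ (0,1]. -/
theorem swapMono_upperInv_implies_psp {n m : ℕ} (q : Fin m → ℕ) (hq : n ≤ ∑ j, q j)
    (f : (Fin n → Pref m) → Fin n → Fin m → ℝ) (hf : ValidAlloc q f)
    (hsm : SwapMonotonic f) (hui : UpperInvariant f) :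
    ∃ r : ℝ, 0 < r ∧ r ≤ 1 ∧ PartialSP r f := by
  classical
  rcases Nat.eq_zero_or_pos n with hn | hn
  · subst hn
    exact ⟨1, one_pos, le_refl 1, fun i => i.elim0⟩
  rcases Nat.eq_zero_or_pos m with hm | hm
  · subst hm
    refine ⟨1, one_pos, le_refl 1, fun i t t' u _ _ => ?_⟩
    have ht' : t' = t i := Equiv.ext fun x => x.elim0
    rw [ht', Function.update_eq_self]
  haveI hFn : Nonempty (Fin n) := ⟨⟨0, hn⟩⟩
  haveI hFm : Nonempty (Fin m) := ⟨⟨0, hm⟩⟩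
  obtain ⟨r, hr0, hr1, hrkey⟩ : ∃ r : ℝ, 0 < r ∧ r ≤ 1 ∧
      ∀ (i : Fin n) (t : Fin n → Pref m) (k : Fin m) (h : k.val + 1 < m),
        (∀ j, f (Function.update t i (swapRanks (t i) k ⟨k.val + 1, h⟩)) i j = f t i j) ∨
        2 * r ≤ f t i ((t i) k) -
          f (Function.update t i (swapRanks (t i) k ⟨k.val + 1, h⟩)) i ((t i) k) := by
    set g : Fin n × (Fin n → Pref m) × Fin m → ℝ := fun x =>
      if h : x.2.2.val + 1 < m then
        if ∀ j, f (Function.update x.2.1 x.1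
              (swapRanks (x.2.1 x.1) x.2.2 ⟨x.2.2.val + 1, h⟩)) x.1 j = f x.2.1 x.1 j then 1
        else min 1 ((f x.2.1 x.1 ((x.2.1 x.1) x.2.2) -
          f (Function.update x.2.1 x.1 (swapRanks (x.2.1 x.1) x.2.2 ⟨x.2.2.val + 1, h⟩)) x.1
            ((x.2.1 x.1) x.2.2)) / 2)
      else 1 with hg
    have hne : (Finset.univ : Finset (Fin n × (Fin n → Pref m) × Fin m)).Nonempty :=
      Finset.univ_nonempty
    refine ⟨min 1 (Finset.univ.inf' hne g), ?_, min_le_left _ _, ?_⟩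
    · refine lt_min one_pos ((Finset.lt_inf'_iff hne).2 fun x _ => ?_)
      obtain ⟨i, t, k⟩ := x
      simp only [hg]
      split_ifs with h hc
      · exact one_pos
      · rcases hsm i t k h with hall | ⟨h1, _⟩
        · exact absurd hall hc
        · exact lt_min one_pos (by linarith)
      · exact one_pos
    · intro i t k h
      by_cases hc : ∀ j, f (Function.update t i (swapRanks (t i) k ⟨k.val + 1, h⟩)) i j = f t i j
      · exact Or.inl hc
      · right
        have h1 : min 1 (Finset.univ.inf' hne g) ≤ g (i, t, k) :=
          le_trans (min_le_right _ _) (Finset.inf'_le g (Finset.mem_univ _))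
        have h2 : g (i, t, k) ≤ (f t i ((t i) k) -
            f (Function.update t i (swapRanks (t i) k ⟨k.val + 1, h⟩)) i ((t i) k)) / 2 := by
          simp only [hg]
          rw [dif_pos h, if_neg hc]
          exact min_le_right _ _
        linarith
  refine ⟨r, hr0, hr1, ?_⟩
  intro i t t' u hcons hurbi
  set σ := t i with hσ
  have step : ∀ τ : Pref m, τ ≠ σ → ∃ τ₁ : Pref m, Mmeas σ τ₁ < Mmeas σ τ ∧
      EU u (f (Function.update t i τ) i) ≤ EU u (f (Function.update t i τ₁) i) := by
    intro τ hτσ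
    have hDne : (Finset.univ.filter fun ℓ => τ ℓ ≠ σ ℓ).Nonempty := by
      by_contra hcon
      rw [Finset.not_nonempty_iff_eq_empty, Finset.filter_eq_empty_iff] at hcon
      exact hτσ (Equiv.ext fun x => not_not.1 (hcon (Finset.mem_univ x)))
    set L := (Finset.univ.filter fun ℓ => τ ℓ ≠ σ ℓ).min' hDne with hLdef
    have hLmem := Finset.min'_mem (Finset.univ.filter fun ℓ => τ ℓ ≠ σ ℓ) hDne
    rw [Finset.mem_filter] at hLmem
    have hLdis : τ L ≠ σ L := hLmem.2
    have hpre : ∀ ℓ : Fin m, ℓ < L → τ ℓ = σ ℓ := by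
      intro ℓ hℓ
      by_contra hne'
      exact absurd (Finset.min'_le _ ℓ (Finset.mem_filter.2 ⟨Finset.mem_univ _, hne'⟩))
        (not_le.2 hℓ)
    have hLp : L < τ.symm (σ L) := by
      rcases lt_trichotomy (τ.symm (σ L)) L with h1 | h1 | h1
      · have h2 := hpre _ h1
        rw [Equiv.apply_symm_apply] at h2
        have h3 := σ.injective h2
        rw [← h3] at h1
        exact absurd h1 (lt_irrefl _)
      · exact absurd (by rw [← h1, Equiv.apply_symm_apply, h1]) hLdis
      · exact h1
    have hpm : (τ.symm (σ L)).val < m := (τ.symm (σ L)).isLt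
    have hLpv : L.val < (τ.symm (σ L)).val := hLp
    set k : Fin m := ⟨(τ.symm (σ L)).val - 1, by omega⟩ with hkdef
    have hkv : k.val = (τ.symm (σ L)).val - 1 := rfl
    have h2 : k.val + 1 < m := by omega
    have hkp1 : (⟨k.val + 1, h2⟩ : Fin m) = τ.symm (σ L) := by
      apply Fin.ext
      show k.val + 1 = (τ.symm (σ L)).val
      omega
    set τ₁ : Pref m := swapRanks τ k ⟨k.val + 1, h2⟩ with hτ₁def
    have hkne : k ≠ (⟨k.val + 1, h2⟩ : Fin m) := by
      intro hcon
      have := congrArg Fin.val hcon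
      omega
    have happ : ∀ x, τ₁ x = τ (Equiv.swap k ⟨k.val + 1, h2⟩ x) := fun x => rfl
    have hsymm : ∀ x, τ₁.symm x = Equiv.swap k ⟨k.val + 1, h2⟩ (τ.symm x) := by
      intro x
      rw [hτ₁def]
      simp [swapRanks]
    have hτ₁k : τ₁ k = σ L := by
      rw [happ, Equiv.swap_apply_left, hkp1, Equiv.apply_symm_apply]
    have hτ₁kp : τ₁ ⟨k.val + 1, h2⟩ = τ k := by
      rw [happ, Equiv.swap_apply_right]
    have hτ₁sb : τ₁.symm (σ L) = k := by
      rw [hsymm, ← hkp1, Equiv.swap_apply_right]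
    have hτ₁sa : τ₁.symm (τ k) = ⟨k.val + 1, h2⟩ := by
      rw [hsymm, Equiv.symm_apply_apply, Equiv.swap_apply_left]
    have hane : τ k ≠ σ L := by
      intro hcon
      have h3 : k = τ.symm (σ L) := by rw [← hcon, Equiv.symm_apply_apply]
      rw [← hkp1] at h3
      exact hkne h3
    have hswapback : swapRanks τ₁ k ⟨k.val + 1, h2⟩ = τ := by
      apply Equiv.ext
      intro x
      show τ₁ (Equiv.swap k ⟨k.val + 1, h2⟩ x) = τ x
      rw [happ, Equiv.swap_apply_self]
    have claim : ∀ j : Fin m, j ≠ σ L → ¬ τ₁.symm j < k → L < σ.symm j := by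
      intro j hjb hnlt
      by_contra hcon
      push_neg at hcon
      rcases lt_or_eq_of_le hcon with hlt | heq
      · have hτj : τ (σ.symm j) = j := by rw [hpre _ hlt, Equiv.apply_symm_apply]
        have hsymmj : τ.symm j = σ.symm j := by rw [← hτj, Equiv.symm_apply_apply, hτj]
        have hltv : (σ.symm j).val < L.val := hlt
        have hjk : τ₁.symm j = σ.symm j := by
          rw [hsymm, hsymmj]
          apply Equiv.swap_apply_of_ne_of_ne
          · intro hcon2
            have := congrArg Fin.val hcon2
            omega
          · intro hcon2
            have := congrArg Fin.val hcon2
            simp only [] at this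
            omega
        apply hnlt
        rw [hjk]
        show (σ.symm j).val < k.val
        omega
      · refine hjb ?_
        rw [← heq]
        exact (σ.apply_symm_apply j).symm
    have hαL : L < σ.symm (τ k) := by
      apply claim (τ k) hane
      rw [hτ₁sa]
      intro hcon
      have : k.val + 1 < k.val := hcon
      omega
    have hMdec : Mmeas σ τ₁ < Mmeas σ τ := by
      refine meas_dec σ τ τ₁ L (σ.symm (τ k)) k (τ.symm (σ L)) hαL (by omega) rfl hτ₁sb ?_ ?_ ?_
      · rw [Equiv.apply_symm_apply, Equiv.symm_apply_apply]
      · rw [Equiv.apply_symm_apply, hτ₁sa, hkp1]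
      · intro ℓ hL hα
        rw [hsymm]
        apply Equiv.swap_apply_of_ne_of_ne
        · intro hcon
          have h3 : σ ℓ = τ k := by rw [← hcon, Equiv.apply_symm_apply]
          exact hα (by rw [← h3, Equiv.symm_apply_apply])
        · intro hcon
          rw [hkp1] at hcon
          have h3 : σ ℓ = σ L := by
            have := congrArg τ hcon
            rwa [Equiv.apply_symm_apply, Equiv.apply_symm_apply] at this
          exact hL (σ.injective h3)
    have hsmi := hsm i (Function.update t i τ₁) k h2
    simp only [Function.update_self, Function.update_idem] at hsmi
    rw [hswapback, hτ₁k, hτ₁kp] at hsmi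
    have huii : ∀ j, τ₁.symm j < k →
        f (Function.update t i τ) i j = f (Function.update t i τ₁) i j := by
      intro j hj
      have h3 := hui i (Function.update t i τ₁) k h2 j ?_
      · simp only [Function.update_self, Function.update_idem] at h3
        rw [hswapback] at h3
        exact h3
      · rw [Function.update_self]
        show τ₁.symm j < τ₁.symm (τ₁ k)
        rw [Equiv.symm_apply_apply]
        exact hj
    refine ⟨τ₁, hMdec, ?_⟩
    rcases hsmi with heq | ⟨hlt1, hlt2⟩
    · apply le_of_eq
      simp only [EU]
      exact Finset.sum_congr rfl fun j _ => by rw [heq j]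
    · have hrk := hrkey i (Function.update t i τ₁) k h2
      simp only [Function.update_self, Function.update_idem] at hrk
      rw [hswapback, hτ₁k] at hrk
      have hdrop : 2 * r ≤ f (Function.update t i τ₁) i (σ L) -
          f (Function.update t i τ) i (σ L) := by
        rcases hrk with hall | hd
        · exact absurd (hall (σ L)) (ne_of_lt hlt1)
        · exact hd
      refine eu_step u (f (Function.update t i τ₁) i) (f (Function.update t i τ) i) (σ L) r hr0
        (fun j => (hf _).1 i j) (fun j => (hf _).1 i j)
        ((hf _).2.1 i) ((hf _).2.1 i) ?_ hdrop
      intro j hjb hne'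
      have hnlt : ¬ τ₁.symm j < k := fun hlt => hne' (huii j hlt)
      have hLj := claim j hjb hnlt
      have hpref : Prefers σ (σ L) j := by
        show σ.symm (σ L) < σ.symm j
        rw [Equiv.symm_apply_apply]
        exact hLj
      exact hurbi (σ L) j ((hcons (σ L) j).1 hpref)
  have hupd : Function.update t i σ = t := by
    rw [hσ]
    exact Function.update_eq_self i t
  have key : ∀ N : ℕ, ∀ τ : Pref m, Mmeas σ τ ≤ N →
      EU u (f (Function.update t i τ) i) ≤ EU u (f t i) := by
    intro N
    induction N with
    | zero =>
      intro τ hτ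
      by_cases hts : τ = σ
      · rw [hts, hupd]
      · obtain ⟨τ₁, h1, _⟩ := step τ hts
        omega
    | succ N ih =>
      intro τ hτ
      by_cases hts : τ = σ
      · rw [hts, hupd]
      · obtain ⟨τ₁, h1, h3⟩ := step τ hts
        exact h3.trans (ih τ₁ (by omega))
  exact key (Mmeas σ t') t' le_rfl
end

section
/- If a mechanism f is r-partially strategyproof for some r ∈ (0,1], then f is upper invariant: swapping two adjacent objects in an agent's report never changes that agent's allocation of any object strictly preferred to both swapped objects. -/
open Finset

noncomputable def uval (r ε : ℝ) (l s : ℕ) : ℝ := if s ≤ l then (r/2)^s else ε * (r/2)^s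

lemma uval_pos {r ε : ℝ} (hr0 : 0 < r) (he0 : 0 < ε) (l s : ℕ) : 0 < uval r ε l s := by
  unfold uval; split <;> positivity

lemma uval_succ_lt {r ε : ℝ} (hr0 : 0 < r) (hr1 : r ≤ 1) (he0 : 0 < ε) (he1 : ε < 1)
    (l s : ℕ) : uval r ε l (s+1) < uval r ε l s := by
  have hp : 0 < (r/2)^s := by positivity
  unfold uval
  rcases le_or_gt (s+1) l with h | h
  · rw [if_pos h, if_pos (by omega), pow_succ]
    nlinarith
  · rcases le_or_gt s l with h2 | h2
    · rw [if_neg (by omega), if_pos h2, pow_succ]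
      have hlt : ε * (r/2) < 1 := by nlinarith
      nlinarith [mul_lt_mul_of_pos_right hlt hp]
    · rw [if_neg (by omega), if_neg (by omega), pow_succ]
      nlinarith [mul_pos he0 hp]

lemma uval_strictAnti {r ε : ℝ} (hr0 : 0 < r) (hr1 : r ≤ 1) (he0 : 0 < ε) (he1 : ε < 1)
    (l : ℕ) : StrictAnti (uval r ε l) :=
  strictAnti_nat_of_succ_lt (uval_succ_lt hr0 hr1 he0 he1 l)

lemma uval_step {r ε : ℝ} (hr0 : 0 < r) (hr1 : r ≤ 1) (he0 : 0 < ε) (he1 : ε < 1)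
    (l s : ℕ) : uval r ε l (s+1) ≤ (r/2) * uval r ε l s := by
  have hp : 0 < (r/2)^s := by positivity
  unfold uval
  rcases le_or_gt (s+1) l with h | h
  · rw [if_pos h, if_pos (by omega), pow_succ]; nlinarith
  · rcases le_or_gt s l with h2 | h2
    · rw [if_neg (by omega), if_pos h2, pow_succ]
      have hle : ε * (r/2) ≤ r/2 := by nlinarith
      nlinarith [mul_le_mul_of_nonneg_right hle hp.le]
    · rw [if_neg (by omega), if_neg (by omega), pow_succ]; nlinarith [mul_pos he0 hp]

lemma consistent_uval {m : ℕ} {r ε : ℝ} (hr0 : 0 < r) (hr1 : r ≤ 1) (he0 : 0 < ε) (he1 : ε < 1)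
    (l : ℕ) (E : Pref m) : Consistent E (fun a => uval r ε l (E.symm a).val) := by
  intro a b
  have hs := uval_strictAnti hr0 hr1 he0 he1 l
  constructor
  · intro hab
    exact hs hab
  · intro hlt
    have : (E.symm a).val < (E.symm b).val := hs.lt_iff_gt.mp hlt
    exact this

lemma umin_eq_of {m : ℕ} (u : Fin m → ℝ) (a0 : Fin m) (h : ∀ a, u a0 ≤ u a) :
    umin u = u a0 := by
  have : Nonempty (Fin m) := ⟨a0⟩
  refine le_antisymm ?_ ?_
  · exact csInf_le (Set.Finite.bddBelow (Set.finite_range u)) ⟨a0, rfl⟩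
  · exact le_csInf (Set.range_nonempty u) (by rintro x ⟨a, rfl⟩; exact h a)

lemma urbi_uval {m : ℕ} {r ε : ℝ} (hr0 : 0 < r) (hr1 : r ≤ 1) (he0 : 0 < ε) (he1 : ε < 1)
    (l : ℕ) (E : Pref m) : URBI r (fun a => uval r ε l (E.symm a).val) := by
  intro a b hba
  have hm : 0 < m := a.pos
  have hs := uval_strictAnti hr0 hr1 he0 he1 l
  have hmin : umin (fun a => uval r ε l (E.symm a).val) = uval r ε l (m-1) := by
    rw [umin_eq_of _ (E ⟨m-1, by omega⟩) ?_]
    · simp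
    · intro x
      simp only [Equiv.symm_apply_apply]
      exact hs.antitone (by have := (E.symm x).isLt; omega)
  set s := (E.symm a).val with hsdef
  set s' := (E.symm b).val with hs'def
  have hss : s < s' := hs.lt_iff_gt.mp hba
  have h1 : uval r ε l s' ≤ uval r ε l (s+1) := hs.antitone (by omega)
  have h2 : uval r ε l (s+1) ≤ (r/2) * uval r ε l s := uval_step hr0 hr1 he0 he1 l s
  have h3 : 0 < uval r ε l (m-1) := uval_pos hr0 he0 l _
  have h4 : 0 < uval r ε l s := uval_pos hr0 he0 l _
  simp only [hmin]
  nlinarith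

lemma eps_limit {c S : ℝ} (h : ∀ ε : ℝ, 0 < ε → ε < 1 → 0 ≤ c + ε * S) : 0 ≤ c := by
  by_contra hc
  push_neg at hc
  have hS : (0:ℝ) ≤ |S| := abs_nonneg S
  set ε := min (1/2) (-c / (2 * (|S| + 1))) with hε
  have h2 : 0 < -c / (2 * (|S| + 1)) := by
    apply div_pos (by linarith) (by linarith)
  have he0 : 0 < ε := lt_min (by norm_num) h2
  have he1 : ε < 1 := lt_of_le_of_lt (min_le_left _ _) (by norm_num)
  have hεle : ε ≤ -c / (2 * (|S| + 1)) := min_le_right _ _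
  have hkey : ε * |S| ≤ -c / 2 := by
    have hh := mul_le_mul_of_nonneg_right hεle hS
    have heq : -c / (2 * (|S| + 1)) * (|S| + 1) = -c / 2 := by
      field_simp
    nlinarith
  have hSle : ε * S ≤ ε * |S| := mul_le_mul_of_nonneg_left (le_abs_self S) he0.le
  have := h ε he0 he1
  linarith

lemma split_sum {m l : ℕ} (hl : l < m) (g : Fin m → ℝ)
    (h0 : ∀ s : Fin m, s.val < l → g s = 0) :
    ∑ s, g s = g ⟨l, hl⟩ + ∑ s ∈ Finset.univ.filter (fun s => l < s.val), g s := by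
  classical
  have hsplit := Finset.sum_filter_add_sum_filter_not Finset.univ (fun s : Fin m => s.val < l) g
  have h1 : ∑ s ∈ Finset.univ.filter (fun s : Fin m => s.val < l), g s = 0 :=
    Finset.sum_eq_zero (fun s hs => h0 s (by simpa using hs))
  have h2 : Finset.univ.filter (fun s : Fin m => ¬ s.val < l)
      = insert (⟨l, hl⟩ : Fin m) (Finset.univ.filter (fun s => l < s.val)) := by
    ext s
    simp [Fin.ext_iff]
    omega
  rw [← hsplit, h1, h2, Finset.sum_insert (by simp)]
  ring

/-- r-partial strategyproofness (for some r ∈ (0,1]) implies upper invariance. -/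
theorem psp_implies_upperInvariant {n m : ℕ} (q : Fin m → ℕ) (hq : n ≤ ∑ j, q j)
    (f : (Fin n → Pref m) → Fin n → Fin m → ℝ) (hf : ValidAlloc q f)
    (r : ℝ) (h0 : 0 < r) (h1 : r ≤ 1) (hpsp : PartialSP r f) : UpperInvariant f := by
  classical
  intro i t k hk j hj
  have hkm : k.val < m := k.isLt
  set T : Pref m := t i with hT
  set k' : Fin m := ⟨k.val + 1, hk⟩ with hk'def
  set T' : Pref m := swapRanks T k k' with hT'
  set p : Fin m → ℝ := f t i with hp
  set p' : Fin m → ℝ := f (Function.update t i T') i with hp'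
  set δ : Fin m → ℝ := fun a => p a - p' a with hδ
  have key : ∀ l : ℕ, ∀ hl : l < k.val, δ (T ⟨l, by omega⟩) = 0 := by
    intro l
    induction l using Nat.strong_induction_on with
    | _ l IH =>
      intro hl
      have hlm : l < m := by omega
      have hδ0 : ∀ s : Fin m, s.val < l → δ (T s) = 0 := by
        intro s hs
        exact IH s.val hs (by omega)
      have hswapl : Equiv.swap k k' (⟨l, hlm⟩ : Fin m) = ⟨l, hlm⟩ :=
        Equiv.swap_apply_of_ne_of_ne
          (by simp [Fin.ext_iff]; omega) (by simp [Fin.ext_iff, hk'def]; omega)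
      have hswapval : ∀ s : Fin m, l < s.val → l < (Equiv.swap k k' s).val := by
        intro s hs
        rcases eq_or_ne s k with rfl | h1
        · rw [Equiv.swap_apply_left]; simp [hk'def]; omega
        rcases eq_or_ne s k' with rfl | h2
        · rw [Equiv.swap_apply_right]; omega
        · rw [Equiv.swap_apply_of_ne_of_ne h1 h2]; exact hs
      set S : ℝ := ∑ s ∈ Finset.univ.filter (fun s : Fin m => l < s.val),
          (r/2)^s.val * δ (T s) with hS
      set S' : ℝ := ∑ s ∈ Finset.univ.filter (fun s : Fin m => l < s.val),
          (r/2)^((Equiv.swap k k' s).val) * δ (T s) with hS'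
      set c : ℝ := (r/2)^l * δ (T ⟨l, hlm⟩) with hc
      have main : ∀ ε : ℝ, 0 < ε → ε < 1 → (0 ≤ c + ε * S ∧ c + ε * S' ≤ 0) := by
        intro ε he0 he1
        set u : Fin m → ℝ := fun a => uval r ε l (T.symm a).val with hu
        set v : Fin m → ℝ := fun a => uval r ε l (T'.symm a).val with hv
        have hEU1 : EU u p' ≤ EU u p :=
          hpsp i t T' u (consistent_uval h0 h1 he0 he1 l T) (urbi_uval h0 h1 he0 he1 l T)
        have hEU2 : EU v p ≤ EU v p' := by
          have h := hpsp i (Function.update t i T') T v ?_ ?_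
          · simpa [hT, Function.update_idem, Function.update_eq_self] using h
          · simpa [Function.update_self] using consistent_uval h0 h1 he0 he1 l T'
          · exact urbi_uval h0 h1 he0 he1 l T'
        have hull : uval r ε l l = (r/2)^l := by rw [uval, if_pos le_rfl]
        have hsum1 : EU u p - EU u p' = c + ε * S := by
          calc EU u p - EU u p' = ∑ a, u a * δ a := by
                rw [EU, EU, ← Finset.sum_sub_distrib]
                exact Finset.sum_congr rfl (fun a _ => by simp only [hδ]; ring)
            _ = ∑ s, u (T s) * δ (T s) := (Equiv.sum_comp T _).symm
            _ = ∑ s : Fin m, uval r ε l s.val * δ (T s) := by simp [hu]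
            _ = c + ε * S := by
                rw [split_sum hlm _ (fun s hs => by rw [hδ0 s hs]; ring), hS,
                  Finset.mul_sum, hc, hull]
                congr 1
                refine Finset.sum_congr rfl (fun s hs => ?_)
                simp only [Finset.mem_filter] at hs
                rw [uval, if_neg (by omega)]
                ring
        have hsum2 : EU v p - EU v p' = c + ε * S' := by
          have hvT : ∀ s : Fin m, v (T s) = uval r ε l ((Equiv.swap k k' s).val) := by
            intro s
            simp [hv, hT', swapRanks, Equiv.symm_trans_apply]
          calc EU v p - EU v p' = ∑ a, v a * δ a := by
                rw [EU, EU, ← Finset.sum_sub_distrib]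
                exact Finset.sum_congr rfl (fun a _ => by simp only [hδ]; ring)
            _ = ∑ s, v (T s) * δ (T s) := (Equiv.sum_comp T _).symm
            _ = ∑ s : Fin m, uval r ε l ((Equiv.swap k k' s).val) * δ (T s) := by
                exact Finset.sum_congr rfl (fun s _ => by rw [hvT s])
            _ = c + ε * S' := by
                rw [split_sum hlm _ (fun s hs => by rw [hδ0 s hs]; ring), hS',
                  Finset.mul_sum, hc, hswapl, hull]
                congr 1
                refine Finset.sum_congr rfl (fun s hs => ?_)
                simp only [Finset.mem_filter] at hs
                rw [uval, if_neg (by have := hswapval s hs.2; omega)]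
                ring
        constructor
        · rw [← hsum1]; linarith
        · rw [← hsum2]; linarith
      have hc1 : 0 ≤ c := eps_limit (fun ε he0 he1 => (main ε he0 he1).1)
      have hc2 : 0 ≤ -c := by
        refine eps_limit (S := -S') (fun ε he0 he1 => ?_)
        have h := (main ε he0 he1).2
        have heq : -c + ε * -S' = -(c + ε * S') := by ring
        rw [heq]; linarith
      have hczero : c = 0 := le_antisymm (by linarith) hc1
      have hps : (0:ℝ) < (r/2)^l := by positivity
      rcases mul_eq_zero.mp hczero with h | h
      · exact absurd h (ne_of_gt hps)
      · exact h
  have hj' : (T.symm j).val < k.val := by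
    have : T.symm j < T.symm (T k) := hj
    simpa using this
  have hδj : δ j = 0 := by
    have h := key (T.symm j).val hj'
    simpa using h
  have : p j - p' j = 0 := hδj
  show p' j = p j
  linarith
end

section
/- If a mechanism f is r-partially strategyproof for some r ∈ (0,1], then f is swap monotonic. -/
open Finset

/-- auxiliary geometric utility -/
noncomputable def geomV {m : ℕ} (ρ ε : ℝ) (l : ℕ) : Fin m → ℝ :=
  fun j => (if (j : ℕ) ≤ l then (1 : ℝ) else ε) * ρ ^ (j : ℕ)

noncomputable def headSum {m : ℕ} (ρ : ℝ) (l : ℕ) (X : Fin m → ℝ) : ℝ :=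
  ∑ j ∈ Finset.univ.filter (fun j : Fin m => (j : ℕ) ≤ l), ρ ^ (j : ℕ) * X j

lemma geomV_pos {m : ℕ} {ρ ε : ℝ} (hρ0 : 0 < ρ) (hε0 : 0 < ε) (l : ℕ) (j : Fin m) :
    0 < geomV ρ ε l j := by
  unfold geomV; split <;> positivity

lemma geomV_step {m : ℕ} {ρ ε : ℝ} (hρ0 : 0 < ρ) (hρ1 : ρ < 1) (hε0 : 0 < ε) (hε1 : ε < 1)
    (l : ℕ) {j j' : Fin m} (hjj : j < j') :
    geomV ρ ε l j' ≤ ρ * geomV ρ ε l j := by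
  have hle : (j : ℕ) + 1 ≤ (j' : ℕ) := hjj
  have h1 : ρ ^ (j' : ℕ) ≤ ρ ^ ((j : ℕ) + 1) :=
    pow_le_pow_of_le_one hρ0.le hρ1.le hle
  have h2 : (0:ℝ) < ρ ^ (j : ℕ) := pow_pos hρ0 _
  have h3 : (0:ℝ) < ρ ^ (j' : ℕ) := pow_pos hρ0 _
  unfold geomV
  by_cases hj' : (j' : ℕ) ≤ l
  · have hj : (j : ℕ) ≤ l := le_trans (by omega) hj'
    simp only [hj, hj', if_pos]
    rw [pow_succ] at h1; nlinarith
  · by_cases hj : (j : ℕ) ≤ l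
    · simp only [hj, hj', if_pos, if_neg, not_false_iff]
      rw [pow_succ] at h1; nlinarith
    · simp only [hj, hj', if_neg, not_false_iff]
      rw [pow_succ] at h1; nlinarith

lemma geomV_anti {m : ℕ} {ρ ε : ℝ} (hρ0 : 0 < ρ) (hρ1 : ρ < 1) (hε0 : 0 < ε) (hε1 : ε < 1)
    (l : ℕ) {j j' : Fin m} (hjj : j < j') :
    geomV ρ ε l j' < geomV ρ ε l j := by
  have := geomV_step (m := m) hρ0 hρ1 hε0 hε1 l hjj
  nlinarith [geomV_pos (m := m) hρ0 hε0 l j]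

lemma geom_utility {m : ℕ} (r ρ ε : ℝ) (hρ0 : 0 < ρ) (hρ1 : ρ < 1) (hρr : ρ ≤ r)
    (hr1 : r ≤ 1) (hε0 : 0 < ε) (hε1 : ε < 1) (l : ℕ) (hm : 0 < m) (σ : Pref m) :
    Consistent σ (fun j => geomV ρ ε l (σ.symm j)) ∧
      URBI r (fun j => geomV ρ ε l (σ.symm j)) := by
  have vpos := geomV_pos (m := m) hρ0 hε0 l
  have vanti := fun {j j' : Fin m} (hj : j < j') => geomV_anti hρ0 hρ1 hε0 hε1 l hj
  have vstep := fun {j j' : Fin m} (hj : j < j') => geomV_step hρ0 hρ1 hε0 hε1 l hj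
  constructor
  · intro a b
    constructor
    · intro hab; exact vanti hab
    · intro hv
      by_contra hno
      unfold Prefers at hno
      push_neg at hno
      rcases lt_or_eq_of_le hno with hlt | heq
      · exact absurd (vanti hlt) (by linarith)
      · have hv' : geomV ρ ε l (σ.symm b) < geomV ρ ε l (σ.symm a) := hv
        rw [heq] at hv'; exact lt_irrefl _ hv'
  · -- URBI
    set M : Fin m := ⟨m - 1, by omega⟩ with hM
    have hle : ∀ j : Fin m, geomV ρ ε l M ≤ geomV ρ ε l j := by
      intro j
      rcases lt_or_eq_of_le (show j ≤ M by
        rw [hM, Fin.le_def]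
        show (j : ℕ) ≤ m - 1
        have := j.isLt; omega) with hlt | heq
      · exact (vanti hlt).le
      · rw [heq]
    have humin : umin (fun j => geomV ρ ε l (σ.symm j)) = geomV ρ ε l M := by
      unfold umin
      apply IsLeast.csInf_eq
      constructor
      · exact ⟨σ M, by simp⟩
      · rintro x ⟨j, rfl⟩; exact hle _
    intro a b hab
    rw [humin]
    set ja := σ.symm a
    set jb := σ.symm b
    have hlt : ja < jb := by
      by_contra hno
      push_neg at hno
      rcases lt_or_eq_of_le hno with h2 | h2
      · exact absurd (vanti h2) (by simp only at hab ⊢; linarith)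
      · simp only [jb, ja] at h2 hab
        rw [h2] at hab; linarith
    have h1 : geomV ρ ε l jb ≤ ρ * geomV ρ ε l ja := vstep hlt
    have h2 := vpos ja
    have h3 := vpos M
    simp only at hab ⊢
    nlinarith

lemma nonpos_of_forall_eps (X T : ℝ) (h : ∀ ε : ℝ, 0 < ε → ε < 1 → X + ε * T ≤ 0) :
    X ≤ 0 := by
  by_contra hX
  push_neg at hX
  rcases le_or_gt 0 T with hT | hT
  · have := h (1/2) (by norm_num) (by norm_num); nlinarith
  · have hT' : 0 < -T := by linarith
    have hε : 0 < X / (2 * -T) := by positivity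
    set ε := min (1/2) (X / (2 * -T)) with hεdef
    have h1 : 0 < ε := lt_min (by norm_num) hε
    have h2 : ε < 1 := lt_of_le_of_lt (min_le_left _ _) (by norm_num)
    have h3 : ε ≤ X / (2 * -T) := min_le_right _ _
    have h4 := h ε h1 h2
    have h5 : ε * (-T) ≤ (X / (2 * -T)) * (-T) :=
      mul_le_mul_of_nonneg_right h3 hT'.le
    rw [le_div_iff₀ (by positivity : (0:ℝ) < 2 * -T)] at h3
    nlinarith

lemma geomV_sum_split {m : ℕ} (ρ ε : ℝ) (l : ℕ) (X : Fin m → ℝ) :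
    ∑ j, geomV ρ ε l j * X j =
      headSum ρ l X +
        ε * ∑ j ∈ Finset.univ.filter (fun j : Fin m => ¬ (j : ℕ) ≤ l), ρ ^ (j : ℕ) * X j := by
  rw [headSum, Finset.mul_sum,
    ← Finset.sum_filter_add_sum_filter_not Finset.univ (fun j : Fin m => (j : ℕ) ≤ l)
      (fun j => geomV ρ ε l j * X j)]
  congr 1
  · apply Finset.sum_congr rfl
    intro j hj
    simp [geomV, (Finset.mem_filter.1 hj).2]
  · apply Finset.sum_congr rfl
    intro j hj
    have := (Finset.mem_filter.1 hj).2
    simp only [geomV, this, if_neg, not_false_iff]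
    ring

lemma headSum_eval {m : ℕ} (ρ : ℝ) (X : Fin m → ℝ) (l : Fin m)
    (hz : ∀ j : Fin m, j < l → X j = 0) :
    headSum ρ (l : ℕ) X = ρ ^ (l : ℕ) * X l := by
  rw [headSum]
  apply Finset.sum_eq_single l
  · intro b hb hbl
    have hb' : (b : ℕ) ≤ (l : ℕ) := (Finset.mem_filter.1 hb).2
    have : b < l := by
      rcases lt_or_eq_of_le (Fin.le_def.2 hb') with h | h
      · exact h
      · exact absurd h hbl
    rw [hz b this, mul_zero]
  · intro hl
    simp at hl

lemma headSum_succ {m : ℕ} (ρ : ℝ) (X : Fin m → ℝ) (N : ℕ) (hN : N + 1 < m) :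
    headSum ρ (N + 1) X = headSum ρ N X + ρ ^ (N + 1) * X ⟨N + 1, hN⟩ := by
  have hset : Finset.univ.filter (fun j : Fin m => (j : ℕ) ≤ N + 1) =
      insert ⟨N + 1, hN⟩ (Finset.univ.filter (fun j : Fin m => (j : ℕ) ≤ N)) := by
    ext j
    simp [Finset.mem_insert, Fin.ext_iff]
    omega
  rw [headSum, hset, Finset.sum_insert (by simp)]
  rw [headSum]; ring


theorem psp_implies_swapMonotonic {n m : ℕ} (q : Fin m → ℕ) (hq : n ≤ ∑ j, q j)
    (f : (Fin n → Pref m) → Fin n → Fin m → ℝ) (hf : ValidAlloc q f)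
    (r : ℝ) (h0 : 0 < r) (h1 : r ≤ 1) (hpsp : PartialSP r f) : SwapMonotonic f := by
  intro i t k h
  set τ := t i with hτ
  set κ : Fin m := ⟨k.val + 1, h⟩ with hκ
  set t' := swapRanks τ k κ with ht'
  set tt := Function.update t i t' with htt
  have hm : 0 < m := by omega
  have hkκ : k < κ := by rw [Fin.lt_def]; simp [hκ]
  set ρ := r / 2 with hρdef
  have hρ0 : 0 < ρ := by rw [hρdef]; linarith
  have hρ1 : ρ < 1 := by rw [hρdef]; linarith
  have hρr : ρ ≤ r := by rw [hρdef]; linarith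
  set D : Fin m → ℝ := fun l => f tt i (τ l) - f t i (τ l) with hD
  set E : Fin m → ℝ := fun l => D ((Equiv.swap k κ) l) with hEdef
  have hupdate : Function.update tt i τ = t := by
    rw [htt, Function.update_idem, hτ, Function.update_eq_self]
  have htti : tt i = t' := Function.update_self i t' t
  have ht'symm : ∀ j, t'.symm (τ j) = Equiv.swap k κ j := by
    intro j
    rw [ht']
    simp [swapRanks]
  -- the two families of inequalities
  have key : ∀ (l : ℕ) (ε : ℝ), 0 < ε → ε < 1 →
      (∑ j, geomV ρ ε l j * D j ≤ 0 ∧ 0 ≤ ∑ j, geomV ρ ε l j * E j) := by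
    intro l ε hε0 hε1
    obtain ⟨hc1, hu1⟩ := geom_utility r ρ ε hρ0 hρ1 hρr h1 hε0 hε1 l hm τ
    obtain ⟨hc2, hu2⟩ := geom_utility r ρ ε hρ0 hρ1 hρr h1 hε0 hε1 l hm t'
    have hA := hpsp i t t' (fun j => geomV ρ ε l (τ.symm j)) hc1 hu1
    rw [← htt] at hA
    have hc2' : Consistent (tt i) (fun j => geomV ρ ε l (t'.symm j)) := by
      rw [htti]; exact hc2
    have hB := hpsp i tt τ (fun j => geomV ρ ε l (t'.symm j)) hc2' hu2
    rw [hupdate] at hB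
    constructor
    · have e2 : ∑ j, geomV ρ ε l j * D j =
          EU (fun j => geomV ρ ε l (τ.symm j)) (f tt i) -
            EU (fun j => geomV ρ ε l (τ.symm j)) (f t i) := by
        calc ∑ j, geomV ρ ε l j * D j
            = ∑ j, geomV ρ ε l (τ.symm (τ j)) * (f tt i (τ j) - f t i (τ j)) := by
              apply Finset.sum_congr rfl; intro j _; rw [Equiv.symm_apply_apply]
          _ = ∑ j, geomV ρ ε l (τ.symm j) * (f tt i j - f t i j) :=
              Equiv.sum_comp τ (fun j => geomV ρ ε l (τ.symm j) * (f tt i j - f t i j))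
          _ = _ := by simp [EU, mul_sub, Finset.sum_sub_distrib]
      rw [e2]; linarith
    · have e3 : ∑ j, geomV ρ ε l j * E j =
          EU (fun j => geomV ρ ε l (t'.symm j)) (f tt i) -
            EU (fun j => geomV ρ ε l (t'.symm j)) (f t i) := by
        calc ∑ j, geomV ρ ε l j * E j
            = ∑ j, geomV ρ ε l (Equiv.swap k κ (Equiv.swap k κ j)) *
                (f tt i (τ (Equiv.swap k κ j)) - f t i (τ (Equiv.swap k κ j))) := by
              apply Finset.sum_congr rfl; intro j _
              rw [Equiv.swap_apply_self]
          _ = ∑ j, geomV ρ ε l (Equiv.swap k κ j) * (f tt i (τ j) - f t i (τ j)) :=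
              Equiv.sum_comp (Equiv.swap k κ)
                (fun j => geomV ρ ε l (Equiv.swap k κ j) * (f tt i (τ j) - f t i (τ j)))
          _ = ∑ j, geomV ρ ε l (t'.symm (τ j)) * (f tt i (τ j) - f t i (τ j)) := by
              apply Finset.sum_congr rfl; intro j _; rw [ht'symm]
          _ = ∑ j, geomV ρ ε l (t'.symm j) * (f tt i j - f t i j) :=
              Equiv.sum_comp τ (fun j => geomV ρ ε l (t'.symm j) * (f tt i j - f t i j))
          _ = _ := by simp [EU, mul_sub, Finset.sum_sub_distrib]
      rw [e3]; linarith
  -- head sums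
  have hA : ∀ l : ℕ, headSum ρ l D ≤ 0 := by
    intro l
    apply nonpos_of_forall_eps _
      (∑ j ∈ Finset.univ.filter (fun j : Fin m => ¬ (j : ℕ) ≤ l), ρ ^ (j : ℕ) * D j)
    intro ε hε0 hε1
    rw [← geomV_sum_split]
    exact (key l ε hε0 hε1).1
  have hB : ∀ l : ℕ, 0 ≤ headSum ρ l E := by
    intro l
    have := nonpos_of_forall_eps (-headSum ρ l E)
      (-∑ j ∈ Finset.univ.filter (fun j : Fin m => ¬ (j : ℕ) ≤ l), ρ ^ (j : ℕ) * E j)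
      (by
        intro ε hε0 hε1
        have := (key l ε hε0 hε1).2
        rw [geomV_sum_split ρ ε l E] at this
        linarith)
    linarith
  have hpow : ∀ N : ℕ, (0:ℝ) < ρ ^ N := fun N => pow_pos hρ0 N
  -- D vanishes below rank k
  have zk : ∀ N : ℕ, ∀ l : Fin m, (l : ℕ) = N → l < k → D l = 0 := by
    intro N
    induction N using Nat.strong_induction_on with
    | _ N IH =>
      intro l hl hlk
      have hz : ∀ j : Fin m, j < l → D j = 0 := by
        intro j hj
        exact IH (j : ℕ) (hl ▸ hj) j rfl (lt_trans hj hlk)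
      have hzE : ∀ j : Fin m, j < l → E j = 0 := by
        intro j hj
        have hjk : j ≠ k := Fin.ne_of_lt (lt_trans hj hlk)
        have hjκ : j ≠ κ := Fin.ne_of_lt (lt_trans (lt_trans hj hlk) hkκ)
        rw [hEdef]
        simp only
        rw [Equiv.swap_apply_of_ne_of_ne hjk hjκ]
        exact hz j hj
      have e1 := headSum_eval ρ D l hz
      have e2 := headSum_eval ρ E l hzE
      have hEl : E l = D l := by
        rw [hEdef]; simp only
        rw [Equiv.swap_apply_of_ne_of_ne (Fin.ne_of_lt hlk) (Fin.ne_of_lt (lt_trans hlk hkκ))]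
      have hA' := hA (l : ℕ); rw [e1] at hA'
      have hB' := hB (l : ℕ); rw [e2, hEl] at hB'
      nlinarith [hpow (l : ℕ)]
  have zk' : ∀ l : Fin m, l < k → D l = 0 := fun l hl => zk (l : ℕ) l rfl hl
  have hzk : ∀ j : Fin m, j < k → D j = 0 := zk'
  have hzEk : ∀ j : Fin m, j < k → E j = 0 := by
    intro j hj
    rw [hEdef]; simp only
    rw [Equiv.swap_apply_of_ne_of_ne (Fin.ne_of_lt hj) (Fin.ne_of_lt (lt_trans hj hkκ))]
    exact hzk j hj
  have hEk : E k = D κ := by rw [hEdef]; simp only [Equiv.swap_apply_left]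
  have hEκ : E κ = D k := by rw [hEdef]; simp only [Equiv.swap_apply_right]
  have hDkLe : D k ≤ 0 := by
    have e1 := headSum_eval ρ D k hzk
    have hA' := hA (k : ℕ); rw [e1] at hA'
    nlinarith [hpow (k : ℕ)]
  have hDκGe : 0 ≤ D κ := by
    have e2 := headSum_eval ρ E k hzEk
    have hB' := hB (k : ℕ); rw [e2, hEk] at hB'
    nlinarith [hpow (k : ℕ)]
  have hκval : ((κ : Fin m) : ℕ) = (k : ℕ) + 1 := rfl
  by_cases hc : D k < 0 ∧ 0 < D κ
  · right
    constructor
    · have := hc.1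
      rw [hD] at this; simp only at this
      linarith
    · have := hc.2
      rw [hD] at this; simp only at this
      linarith
  · left
    -- first show both D k = 0 and D κ = 0
    have hsucc : (k : ℕ) + 1 < m := h
    have hmk : (⟨(k : ℕ) + 1, hsucc⟩ : Fin m) = κ := rfl
    have claim2 : D k = 0 → D κ = 0 := by
      intro hk0
      have e1 : headSum ρ (k : ℕ) D = 0 := by
        rw [headSum_eval ρ D k hzk, hk0, mul_zero]
      have := hA ((k : ℕ) + 1)
      rw [headSum_succ ρ D (k : ℕ) hsucc, e1, hmk] at this
      have : D κ ≤ 0 := by nlinarith [hpow ((k : ℕ) + 1)]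
      linarith
    have claim1 : D κ = 0 → D k = 0 := by
      intro hκ0
      have e2 : headSum ρ (k : ℕ) E = 0 := by
        rw [headSum_eval ρ E k hzEk, hEk, hκ0, mul_zero]
      have := hB ((k : ℕ) + 1)
      rw [headSum_succ ρ E (k : ℕ) hsucc, e2, hmk, hEκ] at this
      have : 0 ≤ D k := by nlinarith [hpow ((k : ℕ) + 1)]
      linarith
    have hk0 : D k = 0 ∧ D κ = 0 := by
      push_neg at hc
      rcases lt_or_eq_of_le hDkLe with hlt | heq
      · have hκ0 : D κ = 0 := le_antisymm (hc hlt) hDκGe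
        exact ⟨claim1 hκ0, hκ0⟩
      · exact ⟨heq, claim2 heq⟩
    -- now all of D vanishes
    have hall : ∀ N : ℕ, ∀ l : Fin m, (l : ℕ) = N → D l = 0 := by
      intro N
      induction N using Nat.strong_induction_on with
      | _ N IH =>
        intro l hl
        have hz : ∀ j : Fin m, j < l → D j = 0 := by
          intro j hj
          exact IH (j : ℕ) (hl ▸ hj) j rfl
        by_cases hlk : l = k
        · rw [hlk]; exact hk0.1
        by_cases hlκ : l = κ
        · rw [hlκ]; exact hk0.2
        have hEl : E l = D l := by
          rw [hEdef]; simp only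
          rw [Equiv.swap_apply_of_ne_of_ne hlk hlκ]
        have hzE : ∀ j : Fin m, j < l → E j = 0 := by
          intro j hj
          by_cases hjk : j = k
          · rw [hEdef]; simp only
            rw [hjk, Equiv.swap_apply_left]; exact hk0.2
          by_cases hjκ : j = κ
          · rw [hEdef]; simp only
            rw [hjκ, Equiv.swap_apply_right]; exact hk0.1
          · rw [hEdef]; simp only
            rw [Equiv.swap_apply_of_ne_of_ne hjk hjκ]
            exact hz j hj
        have e1 := headSum_eval ρ D l hz
        have e2 := headSum_eval ρ E l hzE
        have hA' := hA (l : ℕ); rw [e1] at hA'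
        have hB' := hB (l : ℕ); rw [e2, hEl] at hB'
        nlinarith [hpow (l : ℕ)]
    intro j
    have := hall ((τ.symm j : Fin m) : ℕ) (τ.symm j) rfl
    rw [hD] at this; simp only [Equiv.apply_symm_apply] at this
    linarith
end

section
/- r-partial strategyproofness implies weak strategyproofness: if a mechanism is r-partially strategyproof for some r ∈ (0,1], then for no agent, type profile, and misreport is the truthful allocation strictly first order-stochastically dominated (with respect to the true type) by the allocation from the misreport. -/
open Finset

/-- Extend a function on `Fin m` to `ℕ` by zero, along `σ`. -/
noncomputable def natExt {m : ℕ} (σ : Pref m) (p : Fin m → ℝ) : ℕ → ℝ :=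
  fun j => if h : j < m then p (σ ⟨j, h⟩) else 0

lemma sum_fin_natExt {m : ℕ} (σ : Pref m) (p : Fin m → ℝ) :
    ∑ k : Fin m, p (σ k) = ∑ j ∈ Finset.range m, natExt σ p j := by
  rw [← Fin.sum_univ_eq_sum_range]
  exact Finset.sum_congr rfl fun k _ => by simp [natExt, k.2]

lemma sum_natExt {m : ℕ} (σ : Pref m) (p : Fin m → ℝ) :
    ∑ j ∈ Finset.range m, natExt σ p j = ∑ j, p j := by
  rw [← sum_fin_natExt]
  exact (Equiv.sum_comp σ p)

lemma cumul_eq_range {m : ℕ} (σ : Pref m) (p : Fin m → ℝ) (a : Fin m) :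
    cumul σ p a = ∑ j ∈ Finset.range ((σ.symm a : ℕ) + 1), natExt σ p j := by
  rw [cumul, Finset.sum_filter]
  rw [← Equiv.sum_comp σ (fun b => if σ.symm b ≤ σ.symm a then p b else 0)]
  have h1 : ∀ k : Fin m, (if σ.symm (σ k) ≤ σ.symm a then p (σ k) else 0)
      = (fun j => if h : j < m then (if j ≤ (σ.symm a : ℕ) then p (σ ⟨j, h⟩) else 0) else 0) (k : ℕ) := by
    intro k
    simp only [Equiv.symm_apply_apply, dif_pos k.2, Fin.eta, Fin.le_def]
  rw [Finset.sum_congr rfl (fun k _ => h1 k), Fin.sum_univ_eq_sum_range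
    (fun j => if h : j < m then (if j ≤ ((σ.symm a : ℕ)) then p (σ ⟨j, h⟩) else 0) else 0) m]
  have h2 : Finset.range ((σ.symm a : ℕ) + 1)
      = (Finset.range m).filter (fun j => j ≤ (σ.symm a : ℕ)) := by
    ext j
    have := (σ.symm a).2
    simp only [Finset.mem_range, Finset.mem_filter]
    omega
  rw [h2, Finset.sum_filter]
  refine Finset.sum_congr rfl fun j hj => ?_
  have hjm : j < m := Finset.mem_range.mp hj
  by_cases hle : j ≤ (σ.symm a : ℕ) <;> simp [natExt, hjm, hle]

/-- Key lemma: strict stochastic dominance gives strict EU inequality for geometric utilities. -/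
lemma stochdom_eu {m : ℕ} (s : ℝ) (hs0 : 0 < s) (hs1 : s < 1) (σ : Pref m)
    (p q : Fin m → ℝ) (hp : ∑ j, p j = 1) (hq : ∑ j, q j = 1)
    (hdom : StochDom σ p q) :
    EU (fun a => s ^ ((σ.symm a : ℕ))) q < EU (fun a => s ^ ((σ.symm a : ℕ))) p := by
  set u : Fin m → ℝ := fun a => s ^ ((σ.symm a : ℕ)) with hu
  set d : ℕ → ℝ := fun j => natExt σ p j - natExt σ q j with hd
  -- cumulative sums of d
  have hC : ∀ a : Fin m, cumul σ p a - cumul σ q a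
      = ∑ j ∈ Finset.range ((σ.symm a : ℕ) + 1), d j := by
    intro a
    rw [cumul_eq_range, cumul_eq_range, ← Finset.sum_sub_distrib]
  have hCnonneg : ∀ k, 0 ≤ ∑ j ∈ Finset.range (k + 1), d j := by
    intro k
    by_cases hk : k < m
    · have := hdom.1 (σ ⟨k, hk⟩)
      have := hC (σ ⟨k, hk⟩)
      simp only [Equiv.symm_apply_apply] at this
      linarith [hdom.1 (σ ⟨k, hk⟩), this]
    · -- sum over range (k+1) = sum over range m = 0
      have hsub : ∑ j ∈ Finset.range (k + 1), d j = ∑ j ∈ Finset.range m, d j := by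
        refine (Finset.sum_subset (Finset.range_subset_range.mpr (by omega)) ?_).symm
        intro j _ hj
        have : ¬ j < m := by simp at hj; omega
        simp [hd, natExt, this]
      rw [hsub, hd]
      simp only [Finset.sum_sub_distrib, sum_natExt, hp, hq]
      simp
  have hCtotal : ∑ j ∈ Finset.range m, d j = 0 := by
    simp only [hd, Finset.sum_sub_distrib, sum_natExt, hp, hq]; ring
  -- witness
  obtain ⟨a, ha⟩ := hdom.2
  have haC : 0 < ∑ j ∈ Finset.range ((σ.symm a : ℕ) + 1), d j := by
    have := hC a; linarith
  have ham : (σ.symm a : ℕ) < m := (σ.symm a).2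
  have halt : (σ.symm a : ℕ) + 1 < m := by
    by_contra hh
    have hm : (σ.symm a : ℕ) + 1 = m := by omega
    rw [hm, hCtotal] at haC
    exact lt_irrefl _ haC
  -- EU difference
  have hEU : EU u p - EU u q = ∑ j ∈ Finset.range m, s ^ j * d j := by
    rw [EU, EU, ← Finset.sum_sub_distrib]
    rw [← Equiv.sum_comp σ (fun b => u b * p b - u b * q b), ← Fin.sum_univ_eq_sum_range
      (fun j => s ^ j * d j) m]
    refine Finset.sum_congr rfl fun k _ => ?_
    simp [hu, hd, natExt, k.2, mul_sub]
  -- Abel summation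
  have habel : ∑ j ∈ Finset.range m, s ^ j * d j
      = s ^ (m - 1) * (∑ j ∈ Finset.range m, d j)
        - ∑ i ∈ Finset.range (m - 1), (s ^ (i + 1) - s ^ i) * (∑ j ∈ Finset.range (i + 1), d j) := by
    have := Finset.sum_range_by_parts (fun j => s ^ j) d m
    simpa [smul_eq_mul] using this
  rw [hCtotal, mul_zero, zero_sub] at habel
  have hpos : 0 < ∑ i ∈ Finset.range (m - 1), (s ^ i - s ^ (i + 1)) * (∑ j ∈ Finset.range (i + 1), d j) := by
    refine Finset.sum_pos' (fun i _ => ?_) ⟨(σ.symm a : ℕ), Finset.mem_range.mpr (by omega), ?_⟩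
    · refine mul_nonneg ?_ (hCnonneg i)
      have : s ^ (i + 1) ≤ s ^ i := pow_le_pow_of_le_one hs0.le hs1.le (by omega)
      linarith
    · refine mul_pos ?_ haC
      have : s ^ ((σ.symm a : ℕ) + 1) < s ^ (σ.symm a : ℕ) :=
        pow_lt_pow_right_of_lt_one₀ hs0 hs1 (by omega)
      linarith
  have : ∑ j ∈ Finset.range m, s ^ j * d j
      = ∑ i ∈ Finset.range (m - 1), (s ^ i - s ^ (i + 1)) * (∑ j ∈ Finset.range (i + 1), d j) := by
    rw [habel, ← Finset.sum_neg_distrib]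
    exact Finset.sum_congr rfl fun i _ => by ring
  linarith [hEU, hpos, this ▸ hpos]

/-- r-partial strategyproofness implies weak strategyproofness: no misreport
yields a strictly first order-stochastically dominant allocation. -/
theorem psp_implies_weak_sp {n m : ℕ} (q : Fin m → ℕ) (hq : n ≤ ∑ j, q j)
    (f : (Fin n → Pref m) → Fin n → Fin m → ℝ) (hf : ValidAlloc q f)
    (r : ℝ) (h0 : 0 < r) (h1 : r ≤ 1) (hpsp : PartialSP r f) :
    ∀ (i : Fin n) (t : Fin n → Pref m) (t' : Pref m),
      ¬ StochDom (t i) (f (Function.update t i t') i) (f t i) := by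
  intro i t t' hdom
  set σ := t i with hσ
  set s : ℝ := r / 2 with hs
  have hs0 : 0 < s := by positivity
  have hs1 : s < 1 := by rw [hs]; linarith
  set u : Fin m → ℝ := fun a => s ^ ((σ.symm a : ℕ)) with hu
  have hmono : ∀ a b : Fin m, σ.symm a < σ.symm b ↔ u b < u a := by
    intro a b
    constructor
    · intro h
      exact pow_lt_pow_right_of_lt_one₀ hs0 hs1 h
    · intro h
      by_contra hle
      push_neg at hle
      have : u a ≤ u b := pow_le_pow_of_le_one hs0.le hs1.le hle
      linarith
  have hcons : Consistent σ u := fun a b => hmono a b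
  have hurbi : URBI r u := by
    intro a b hba
    have hμ0 : 0 ≤ umin u := Real.sInf_nonneg (by rintro x ⟨c, rfl⟩; positivity)
    have hμa : umin u ≤ u a := csInf_le (Set.finite_range u).bddBelow ⟨a, rfl⟩
    have hrank : (σ.symm a : ℕ) < (σ.symm b : ℕ) := by
      by_contra hh
      push_neg at hh
      have : u a ≤ u b := pow_le_pow_of_le_one hs0.le hs1.le hh
      linarith
    have hub : u b ≤ s * u a := by
      have h2 : s ^ ((σ.symm b : ℕ)) ≤ s ^ ((σ.symm a : ℕ) + 1) :=
        pow_le_pow_of_le_one hs0.le hs1.le hrank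
      have h3 : s ^ ((σ.symm a : ℕ) + 1) = s * u a := by rw [hu]; ring
      calc u b = s ^ ((σ.symm b : ℕ)) := rfl
        _ ≤ s ^ ((σ.symm a : ℕ) + 1) := h2
        _ = s * u a := h3
    have hsr : s ≤ r := by rw [hs]; linarith
    nlinarith [hμ0, hμa, hub, hsr, hs1.le]
  have hle := hpsp i t t' u hcons hurbi
  have hlt := stochdom_eu s hs0 hs1 σ (f (Function.update t i t') i) (f t i)
    ((hf (Function.update t i t')).2.1 i) ((hf t).2.1 i) hdom
  rw [← hu] at hlt
  linarith
end

section
/- Fix an agent i, a type t_i with preference order a_1 ≻ … ≻ a_m, a misreport t_i', and define δ_j = f_i(t_i)(j) − f_i(t_i')(j). Define polynomials x_1(s) = δ_{a_1} and x_k(s) = s·x_{k−1}(s) + δ_{a_k} for k ≥ 2. If x_k(1/r) ≥ 0 for all k ∈ {1,…,m−1}, then for every utility u consistent with t_i satisfying URBI(r) and min u = u(a_m) = 0, we have Σ_j δ_j·u(j) ≥ 0. -/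
open Finset

/-- Horner polynomial x_k(s) = Σ_{j ≤ k} δ_{a_j} s^{k−j}, where a_j is the j-th choice
under type t (0-indexed); this is the closed form of the recursion
x_0(s) = δ_{a_0}, x_k(s) = s·x_{k−1}(s) + δ_{a_k}. -/
def hornerX {m : ℕ} (t : Pref m) (δ : Fin m → ℝ) (s : ℝ) (k : Fin m) : ℝ :=
  ∑ j ∈ Finset.univ.filter (fun j => j ≤ k), δ ((t) j) * s ^ (k.val - j.val)

lemma horner_Xrec (D : ℕ → ℝ) (s : ℝ) (M : ℕ) :
    ∑ j ∈ Finset.range (M + 2), D j * s ^ (M + 1 - j)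
      = s * (∑ j ∈ Finset.range (M + 1), D j * s ^ (M - j)) + D (M + 1) := by
  rw [Finset.sum_range_succ, Finset.mul_sum]
  simp only [Nat.sub_self, pow_zero, mul_one]
  congr 1
  refine Finset.sum_congr rfl fun j hj => ?_
  have hj' : j ≤ M := by simpa [Nat.lt_succ_iff] using hj
  rw [show M + 1 - j = (M - j) + 1 by omega, pow_succ]
  ring

lemma horner_abel (D V : ℕ → ℝ) (s : ℝ) (M : ℕ) :
    ∑ k ∈ Finset.range (M + 1), D k * V k
      = (∑ k ∈ Finset.range M,
          (∑ j ∈ Finset.range (k + 1), D j * s ^ (k - j)) * (V k - s * V (k + 1)))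
        + (∑ j ∈ Finset.range (M + 1), D j * s ^ (M - j)) * V M := by
  induction M with
  | zero => simp
  | succ M ih =>
      rw [Finset.sum_range_succ (fun k => D k * V k) (M + 1), ih,
        Finset.sum_range_succ
          (fun k => (∑ j ∈ Finset.range (k + 1), D j * s ^ (k - j)) * (V k - s * V (k + 1))) M,
        horner_Xrec]
      ring

lemma hornerX_eq_range {m : ℕ} (t : Pref (m + 1)) (δ : Fin (m + 1) → ℝ) (s : ℝ)
    (k : Fin (m + 1)) :
    hornerX t δ s k
      = ∑ j ∈ Finset.range (k.val + 1),
          (if h : j < m + 1 then δ (t ⟨j, h⟩) else 0) * s ^ (k.val - j) := by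
  set F : ℕ → ℝ := fun j => if h : j < m + 1 then
      (if j ≤ k.val then δ (t ⟨j, h⟩) * s ^ (k.val - j) else 0) else 0 with hF
  have step1 : hornerX t δ s k = ∑ j ∈ Finset.range (m + 1), F j := by
    unfold hornerX
    rw [Finset.sum_filter, ← Fin.sum_univ_eq_sum_range F (m + 1)]
    refine Finset.sum_congr rfl fun j _ => ?_
    simp only [hF]
    by_cases h : j.val ≤ k.val
    · rw [if_pos (Fin.le_def.mpr h), dif_pos j.isLt, if_pos h, Fin.eta]
    · rw [if_neg (fun hc => h (Fin.le_def.mp hc)), dif_pos j.isLt, if_neg h]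
  rw [step1]
  have hsub : Finset.range (k.val + 1) ⊆ Finset.range (m + 1) :=
    Finset.range_subset_range.2 (by omega)
  have hz : ∀ j ∈ Finset.range (m + 1), j ∉ Finset.range (k.val + 1) → F j = 0 := by
    intro j _ hj'
    have : ¬ j ≤ k.val := by simp only [Finset.mem_range, Nat.lt_succ_iff] at hj'; omega
    simp only [hF]
    by_cases h : j < m + 1
    · rw [dif_pos h, if_neg this]
    · rw [dif_neg h]
  rw [← Finset.sum_subset hsub hz]
  refine Finset.sum_congr rfl fun j hj => ?_
  have hj1 : j ≤ k.val := by simpa [Nat.lt_succ_iff] using hj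
  have hj2 : j < m + 1 := by omega
  simp only [hF]
  rw [dif_pos hj2, if_pos hj1, dif_pos hj2]

/-- sufficiency direction of the verification criterion: if all Horner
polynomials are nonnegative at s = 1/r, then every consistent URBI(r) utility with
minimum (last-choice) value 0 weakly prefers the truthful allocation. -/
theorem horner_sufficient {n m : ℕ}
    (f : (Fin n → Pref (m + 1)) → Fin n → Fin (m + 1) → ℝ)
    (i : Fin n) (t : Fin n → Pref (m + 1)) (t' : Pref (m + 1))
    (δ : Fin (m + 1) → ℝ)
    (hδ : ∀ j, δ j = f t i j - f (Function.update t i t') i j)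
    (r : ℝ) (h0 : 0 < r) (h1 : r ≤ 1)
    (hx : ∀ k : Fin (m + 1), k.val < m → 0 ≤ hornerX (t i) δ (1 / r) k)
    (u : Fin (m + 1) → ℝ) (hu : Consistent (t i) u) (hurbi : URBI r u)
    (hlast : u ((t i) (Fin.last m)) = 0) :
    0 ≤ ∑ j, δ j * u j := by
  set s : ℝ := 1 / r with hs
  -- strict monotonicity of ranked utilities
  have hvs : ∀ k k' : Fin (m + 1), k < k' → u ((t i) k') < u ((t i) k) := by
    intro k k' h
    exact (hu ((t i) k) ((t i) k')).mp (by simpa [Prefers] using h)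
  -- nonnegativity of u
  have hnn : ∀ j, 0 ≤ u j := by
    intro j
    rcases eq_or_lt_of_le (Fin.le_last ((t i).symm j)) with h | h
    · have : (t i) ((t i).symm j) = (t i) (Fin.last m) := by rw [h]
      rw [Equiv.apply_symm_apply] at this
      rw [this, hlast]
    · have := hvs ((t i).symm j) (Fin.last m) h
      rw [Equiv.apply_symm_apply, hlast] at this
      linarith [hvs ((t i).symm j) (Fin.last m) h]
  -- the minimum of u is 0
  have humin : umin u = 0 := by
    unfold umin
    apply IsLeast.csInf_eq
    constructor
    · exact ⟨(t i) (Fin.last m), hlast⟩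
    · rintro x ⟨j, rfl⟩; exact hnn j
  -- URBI gives the key ratio inequality
  have hkey : ∀ k : Fin (m + 1), (hk : k.val < m) →
      s * u ((t i) ⟨k.val + 1, by omega⟩) ≤ u ((t i) k) := by
    intro k hk
    set k1 : Fin (m + 1) := ⟨k.val + 1, by omega⟩
    have hlt : u ((t i) k1) < u ((t i) k) := hvs k k1 (by simp [Fin.lt_def, k1])
    have := hurbi ((t i) k) ((t i) k1) hlt
    rw [humin, sub_zero, sub_zero] at this
    rw [hs, div_mul_eq_mul_div, div_le_iff₀ h0, one_mul]
    calc u ((t i) k1) ≤ r * u ((t i) k) := this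
      _ = u ((t i) k) * r := by ring
  -- transfer the sum to ranks
  have hsum : ∑ j, δ j * u j = ∑ k : Fin (m + 1), δ ((t i) k) * u ((t i) k) :=
    (Equiv.sum_comp (t i) (fun j => δ j * u j)).symm
  set D : ℕ → ℝ := fun j => if h : j < m + 1 then δ ((t i) ⟨j, h⟩) else 0 with hD
  set V : ℕ → ℝ := fun j => if h : j < m + 1 then u ((t i) ⟨j, h⟩) else 0 with hV
  have hsum2 : ∑ k : Fin (m + 1), δ ((t i) k) * u ((t i) k)
      = ∑ k ∈ Finset.range (m + 1), D k * V k := by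
    rw [← Fin.sum_univ_eq_sum_range (fun k => D k * V k) (m + 1)]
    refine Finset.sum_congr rfl fun k _ => ?_
    simp [hD, hV, k.isLt, Fin.is_le]
  rw [hsum, hsum2, horner_abel D V s m]
  have hVm : V m = 0 := by
    have : (⟨m, by omega⟩ : Fin (m + 1)) = Fin.last m := rfl
    simp [hV, this, hlast]
  rw [hVm, mul_zero, add_zero]
  apply Finset.sum_nonneg
  intro k hk
  have hkm : k < m := Finset.mem_range.mp hk
  have hX : 0 ≤ ∑ j ∈ Finset.range (k + 1), D j * s ^ (k - j) := by
    have := hx ⟨k, by omega⟩ hkm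
    rw [hornerX_eq_range] at this
    simpa [hD] using this
  have hVk : V k = u ((t i) ⟨k, by omega⟩) := by simp [hV, Nat.lt_succ_of_lt hkm, hkm.le]
  have hVk1 : V (k + 1) = u ((t i) ⟨k + 1, by omega⟩) := by
    simp [hV, Nat.succ_lt_succ hkm, hkm]
  have hstep : 0 ≤ V k - s * V (k + 1) := by
    rw [hVk, hVk1, sub_nonneg]
    exact hkey ⟨k, by omega⟩ hkm
  exact mul_nonneg hX hstep
end

section
/- Fix a vector δ ∈ ℝ^m with Σ_j δ_j = 0 and ranks indexed by a preference order a_1 ≻ … ≻ a_m, and the Horner polynomials x_k(s) as above. If x_{k̃}(1/r) < 0 for some k̃ ∈ {1,…,m−1}, then there exists a utility u consistent with the order and satisfying URBI(r) such that Σ_j δ_j·u(j) < 0. -/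
open Finset

/-- necessity direction: if some Horner polynomial is negative at s = 1/r,
then some consistent URBI(r) utility strictly profits (Σ δ_j u(j) < 0). -/
theorem horner_necessary {m : ℕ} (δ : Fin (m + 1) → ℝ) (hsum : ∑ j, δ j = 0)
    (t : Pref (m + 1)) (r : ℝ) (h0 : 0 < r) (h1 : r ≤ 1)
    (k : Fin (m + 1)) (hk : k.val < m) (hneg : hornerX t δ (1 / r) k < 0) :
    ∃ u : Fin (m + 1) → ℝ, Consistent t u ∧ URBI r u ∧ ∑ j, δ j * u j < 0 := by
  have hm : 0 < m := lt_of_le_of_lt (Nat.zero_le _) hk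
  set s : ℝ := 1 / r with hs
  have hs1 : 1 ≤ s := by rw [hs, le_div_iff₀ h0]; linarith
  have hrs : r * s = 1 := by rw [hs]; field_simp
  -- find s' > s with hornerX t δ s' k < 0, by continuity
  have hcont : Continuous fun x : ℝ => hornerX t δ x k := by
    unfold hornerX
    exact continuous_finset_sum _ fun j _ => continuous_const.mul (continuous_pow _)
  have hopen : IsOpen {x : ℝ | hornerX t δ x k < 0} := isOpen_lt hcont continuous_const
  have hev : ∀ᶠ x in nhdsWithin s (Set.Ioi s), hornerX t δ x k < 0 :=
    eventually_nhdsWithin_of_eventually_nhds (hopen.mem_nhds hneg)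
  obtain ⟨s', hneg', hs'mem⟩ := (hev.and eventually_mem_nhdsWithin).exists
  have hss' : s < s' := hs'mem
  have hs'1 : 1 < s' := lt_of_le_of_lt hs1 hss'
  have hs'0 : 0 < s' := by linarith
  have hrs' : 1 < r * s' := by nlinarith
  set B : ℝ := s' ^ m with hB
  have hB1 : 1 ≤ B := one_le_pow₀ hs'1.le
  have hB0 : 0 < B := by linarith
  set T0 : ℝ := ∑ i ∈ Finset.univ.filter (fun i : Fin (m+1) => ¬ i ≤ k),
      δ (t i) * (if i.val = m then 0 else s' ^ (m - 1 - i.val)) with hT0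
  set x' : ℝ := hornerX t δ s' k with hx'
  have hx'neg : x' < 0 := hneg'
  set η : ℝ := min (r / (2 * B)) ((-x') / (2 * (|T0| + 1))) with hη
  have hη0 : 0 < η := lt_min (by positivity) (div_pos (by linarith) (by positivity))
  have hηB : η * B ≤ r / 2 := by
    have h1 : η ≤ r / (2 * B) := min_le_left _ _
    rw [le_div_iff₀ (by positivity)] at h1
    nlinarith
  have hηT : η * T0 ≤ -x' / 2 := by
    have h1 : η ≤ (-x') / (2 * (|T0| + 1)) := min_le_right _ _
    rw [le_div_iff₀ (by positivity)] at h1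
    have h2 : (0:ℝ) ≤ |T0| := abs_nonneg _
    have h3 : T0 ≤ |T0| := le_abs_self _
    nlinarith [mul_le_mul_of_nonneg_left h3 hη0.le]
  set v : Fin (m+1) → ℝ := fun i =>
    if i.val ≤ k.val then s' ^ (k.val - i.val)
    else if i.val = m then 0 else η * s' ^ (m - 1 - i.val) with hv
  have hvle : ∀ i : Fin (m+1), i.val ≤ k.val → v i = s' ^ (k.val - i.val) := by
    intro i h; simp only [hv]; rw [if_pos h]
  have hvm : ∀ i : Fin (m+1), i.val = m → v i = 0 := by
    intro i h; simp only [hv]; rw [if_neg (by omega), if_pos h]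
  have hvmid : ∀ i : Fin (m+1), ¬ i.val ≤ k.val → i.val ≠ m →
      v i = η * s' ^ (m - 1 - i.val) := by
    intro i h h'; simp only [hv]; rw [if_neg h, if_neg h']
  have hv0 : ∀ i, 0 ≤ v i := by
    intro i
    by_cases h1 : i.val ≤ k.val
    · rw [hvle i h1]; positivity
    · by_cases h2 : i.val = m
      · rw [hvm i h2]
      · rw [hvmid i h1 h2]; positivity
  -- small values bounded
  have hsmall : ∀ i : Fin (m+1), ¬ i.val ≤ k.val → i.val ≠ m → v i ≤ r / 2 := by
    intro i h1 h2
    rw [hvmid i h1 h2]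
    have hp : s' ^ (m - 1 - i.val) ≤ B := by
      rw [hB]; exact pow_le_pow_right₀ hs'1.le (by omega)
    calc η * s' ^ (m - 1 - i.val) ≤ η * B := mul_le_mul_of_nonneg_left hp hη0.le
      _ ≤ r / 2 := hηB
  -- the key monotonicity/URBI-gap lemma
  have hkey : ∀ i j : Fin (m+1), i < j → v j ≤ r * v i ∧ v j < v i := by
    intro i j hij
    rw [Fin.lt_def] at hij
    by_cases hjk : j.val ≤ k.val
    · have hik : i.val ≤ k.val := by omega
      rw [hvle j hjk, hvle i hik]
      have hsplit : k.val - i.val = (k.val - j.val) + (j.val - i.val) := by omega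
      rw [hsplit, pow_add]
      have hp1 : 0 < s' ^ (k.val - j.val) := by positivity
      have hp2 : s' ≤ s' ^ (j.val - i.val) := by
        calc s' = s' ^ 1 := (pow_one s').symm
          _ ≤ s' ^ (j.val - i.val) := pow_le_pow_right₀ hs'1.le (by omega)
      have h4 : r * s' ≤ r * s' ^ (j.val - i.val) := mul_le_mul_of_nonneg_left hp2 h0.le
      have h5 : 1 < s' ^ (j.val - i.val) := lt_of_lt_of_le hs'1 hp2
      constructor
      · calc s' ^ (k.val - j.val) = 1 * s' ^ (k.val - j.val) := (one_mul _).symm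
          _ ≤ (r * s' ^ (j.val - i.val)) * s' ^ (k.val - j.val) :=
            mul_le_mul_of_nonneg_right (hrs'.le.trans h4) hp1.le
          _ = r * (s' ^ (k.val - j.val) * s' ^ (j.val - i.val)) := by ring
      · calc s' ^ (k.val - j.val) = s' ^ (k.val - j.val) * 1 := (mul_one _).symm
          _ < s' ^ (k.val - j.val) * s' ^ (j.val - i.val) := mul_lt_mul_of_pos_left h5 hp1
    · have hjm : j.val ≤ m := by omega
      by_cases hik : i.val ≤ k.val
      · rw [hvle i hik]
        have hone : 1 ≤ s' ^ (k.val - i.val) := one_le_pow₀ hs'1.le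
        by_cases hjm' : j.val = m
        · rw [hvm j hjm']
          constructor
          · positivity
          · linarith
        · have hb := hsmall j hjk hjm'
          constructor
          · calc v j ≤ r / 2 := hb
              _ ≤ r * 1 := by linarith
              _ ≤ r * s' ^ (k.val - i.val) := mul_le_mul_of_nonneg_left hone h0.le
          · calc v j ≤ r / 2 := hb
              _ < 1 := by linarith
              _ ≤ s' ^ (k.val - i.val) := hone
      · have him : i.val ≠ m := by omega
        rw [hvmid i hik him]
        have hpi : 0 < η * s' ^ (m - 1 - i.val) := by positivity
        by_cases hjm' : j.val = m
        · rw [hvm j hjm']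
          constructor
          · positivity
          · exact hpi
        · rw [hvmid j hjk hjm']
          have hsplit : m - 1 - i.val = (m - 1 - j.val) + (j.val - i.val) := by omega
          rw [hsplit, pow_add]
          have hp1 : 0 < s' ^ (m - 1 - j.val) := by positivity
          have hp2 : s' ≤ s' ^ (j.val - i.val) := by
            calc s' = s' ^ 1 := (pow_one s').symm
              _ ≤ s' ^ (j.val - i.val) := pow_le_pow_right₀ hs'1.le (by omega)
          have h4 : r * s' ≤ r * s' ^ (j.val - i.val) := mul_le_mul_of_nonneg_left hp2 h0.le
          have h5 : 1 < s' ^ (j.val - i.val) := lt_of_lt_of_le hs'1 hp2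
          have hq : 0 < η * s' ^ (m - 1 - j.val) := by positivity
          constructor
          · calc η * s' ^ (m - 1 - j.val) = 1 * (η * s' ^ (m - 1 - j.val)) := (one_mul _).symm
              _ ≤ (r * s' ^ (j.val - i.val)) * (η * s' ^ (m - 1 - j.val)) :=
                mul_le_mul_of_nonneg_right (hrs'.le.trans h4) hq.le
              _ = r * (η * (s' ^ (m - 1 - j.val) * s' ^ (j.val - i.val))) := by ring
          · calc η * s' ^ (m - 1 - j.val) = (η * s' ^ (m - 1 - j.val)) * 1 := (mul_one _).symm
              _ < (η * s' ^ (m - 1 - j.val)) * s' ^ (j.val - i.val) := mul_lt_mul_of_pos_left h5 hq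
              _ = η * (s' ^ (m - 1 - j.val) * s' ^ (j.val - i.val)) := by ring
  set u : Fin (m+1) → ℝ := fun a => v (t.symm a) with hu
  have hcons : Consistent t u := by
    intro a b
    unfold Prefers
    constructor
    · intro h
      exact (hkey _ _ h).2
    · intro h
      by_contra hc
      push_neg at hc
      rcases hc.lt_or_eq with h2 | h2
      · exact absurd (hkey _ _ h2).2 (not_lt.mpr h.le)
      · simp only [hu] at h; rw [h2] at h; exact lt_irrefl _ h
  have huminzero : umin u = 0 := by
    have hmem : (0:ℝ) ∈ Set.range u := by
      refine ⟨t ⟨m, Nat.lt_succ_self m⟩, ?_⟩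
      show v (t.symm (t ⟨m, Nat.lt_succ_self m⟩)) = 0
      rw [Equiv.symm_apply_apply]
      exact hvm _ rfl
    have hbdd : BddBelow (Set.range u) := (Set.finite_range u).bddBelow
    refine le_antisymm (csInf_le hbdd hmem) (le_csInf ⟨0, hmem⟩ ?_)
    rintro x ⟨a, rfl⟩
    exact hv0 _
  refine ⟨u, hcons, ?_, ?_⟩
  · intro a b hba
    rw [huminzero, sub_zero, sub_zero]
    have hab : t.symm a < t.symm b := (hcons a b).mpr hba
    exact (hkey _ _ hab).1
  · have hre : ∑ j, δ j * u j = ∑ i, δ (t i) * v i := by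
      rw [hu]
      rw [← Equiv.sum_comp t (fun j => δ j * v (t.symm j))]
      simp [Equiv.symm_apply_apply]
    rw [hre, ← Finset.sum_filter_add_sum_filter_not Finset.univ (fun i => i ≤ k)]
    have hS1 : ∑ i ∈ Finset.univ.filter (fun i => i ≤ k), δ (t i) * v i = x' := by
      rw [hx']; unfold hornerX
      refine Finset.sum_congr rfl fun i hi => ?_
      rw [Finset.mem_filter] at hi
      rw [hvle i (Fin.le_def.mp hi.2)]
    have hS2 : ∑ i ∈ Finset.univ.filter (fun i => ¬ i ≤ k), δ (t i) * v i = η * T0 := by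
      rw [hT0, Finset.mul_sum]
      refine Finset.sum_congr rfl fun i hi => ?_
      rw [Finset.mem_filter] at hi
      have hik : ¬ i.val ≤ k.val := fun h => hi.2 (Fin.le_def.mpr h)
      by_cases h2 : i.val = m
      · rw [hvm i h2, if_pos h2]; ring
      · rw [hvmid i hik h2, if_neg h2]; ring
    rw [hS1, hS2]
    linarith
end

section
/- There exists a weakly strategyproof single-agent decision rule that is nonetheless manipulable in mixed strategies: with allocations f(t) = (1/3,1/3,1/3), f(t') = (5/9, 0, 4/9), f(t'') = (2/9, 7/9, 0) over objects (a,b,c) for reports t: a≻b≻c, t': a≻c≻b, t'': b≻a≻c, no allocation strictly first order-stochastically dominates f(t) with respect to t, yet the mixture (1/2)f(t') + (1/2)f(t'') = (3.5/9, 3.5/9, 2/9) strictly first order-stochastically dominates f(t) with respect to t. -/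
open Finset

/-- a weakly strategyproof single-agent decision rule that is manipulable in
mixed strategies: with reports t: a≻b≻c, t': a≻c≻b, t'': b≻a≻c (a = 0, b = 1, c = 2),
neither f(t') nor f(t'') strictly stochastically dominates f(t) w.r.t. t, yet their
(1/2,1/2)-mixture does. -/
theorem weak_sp_mixed_manipulable :
    ∃ f : Pref 3 → Fin 3 → ℝ,
      f (Equiv.refl (Fin 3)) = ![1 / 3, 1 / 3, 1 / 3] ∧
      f (Equiv.swap 1 2) = ![5 / 9, 0, 4 / 9] ∧
      f (Equiv.swap 0 1) = ![2 / 9, 7 / 9, 0] ∧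
      ¬ StochDom (Equiv.refl (Fin 3)) (f (Equiv.swap 1 2)) (f (Equiv.refl (Fin 3))) ∧
      ¬ StochDom (Equiv.refl (Fin 3)) (f (Equiv.swap 0 1)) (f (Equiv.refl (Fin 3))) ∧
      StochDom (Equiv.refl (Fin 3))
        (fun j => (f (Equiv.swap 1 2) j + f (Equiv.swap 0 1) j) / 2)
        (f (Equiv.refl (Fin 3))) := by
  classical
  refine ⟨fun t => if t = Equiv.swap 1 2 then ![5 / 9, 0, 4 / 9]
      else if t = Equiv.swap 0 1 then ![2 / 9, 7 / 9, 0]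
      else ![1 / 3, 1 / 3, 1 / 3], ?_, ?_, ?_, ?_, ?_, ?_⟩
  · simp only [if_neg (by decide : (Equiv.refl (Fin 3)) ≠ Equiv.swap 1 2),
      if_neg (by decide : (Equiv.refl (Fin 3)) ≠ Equiv.swap 0 1)]
  · simp
  · simp only [if_neg (by decide : (Equiv.swap 0 1 : Pref 3) ≠ Equiv.swap 1 2), if_pos rfl,
      if_true]
  · simp only [if_pos rfl,
      if_neg (by decide : (Equiv.refl (Fin 3)) ≠ Equiv.swap 1 2),
      if_neg (by decide : (Equiv.refl (Fin 3)) ≠ Equiv.swap 0 1)]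
    rintro ⟨h, -⟩
    have := h 1
    simp [cumul, Finset.sum_filter, Fin.sum_univ_three, Fin.le_iff_val_le_val] at this
    norm_num [Matrix.cons_val] at this
  · simp only [if_neg (by decide : (Equiv.swap 0 1 : Pref 3) ≠ Equiv.swap 1 2), if_pos rfl,
      if_neg (by decide : (Equiv.refl (Fin 3)) ≠ Equiv.swap 1 2),
      if_neg (by decide : (Equiv.refl (Fin 3)) ≠ Equiv.swap 0 1)]
    rintro ⟨h, -⟩
    have := h 0
    simp [cumul, Finset.sum_filter, Fin.sum_univ_three] at this
    norm_num at this
  · simp only [if_pos rfl,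
      if_neg (by decide : (Equiv.swap 0 1 : Pref 3) ≠ Equiv.swap 1 2),
      if_neg (by decide : (Equiv.refl (Fin 3)) ≠ Equiv.swap 1 2),
      if_neg (by decide : (Equiv.refl (Fin 3)) ≠ Equiv.swap 0 1)]
    constructor
    · intro a
      fin_cases a <;>
        · simp [cumul, Finset.sum_filter, Fin.sum_univ_three, Fin.le_iff_val_le_val]
          norm_num [Matrix.cons_val]
    · exact ⟨0, by simp [cumul, Finset.sum_filter, Fin.sum_univ_three]; norm_num⟩
end
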